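/- arXiv:2102.09851 — 4 statements merged into one kernel-verified Lean document; each statement's English description precedes it below -/
import Mathlib

section
/- Let d > 0 and let b, σ be real numbers with b ≠ 0 and σ ≠ 0. Let (a_n) be the sequence defined by a_0 = 1 and a_{n+1} = a_n − (d/a_n)(b/σ)². Then there exists an integer n ≥ 0 such that a_0, a_1, …, a_n are all positive and a_{n+1} ≤ 0; moreover the smallest such n satisfies n ≤ σ²/(d·b²). In particular the quantity N(d, b, σ) := inf { n ≥ 0 : a_0, …, a_n > 0 and a_{n+1} ≤ 0 } is a well-defined finite natural number. -/
/-- For the sequence `a 0 = 1`, `a (n+1) = a n - (d / a n) * (b/σ)^2`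
(with `d > 0`, `b ≠ 0`, `σ ≠ 0`), there is a first index `n` at which the sequence,
having stayed positive up to `n`, drops to a nonpositive value at `n+1`; moreover this
smallest `n` satisfies `n ≤ σ² / (d b²)`.  In particular `N(d,b,σ)` is a well-defined
finite natural number. -/
theorem stmt_1 (d b σ : ℝ) (hd : 0 < d) (hb : b ≠ 0) (hσ : σ ≠ 0)
    (a : ℕ → ℝ) (ha0 : a 0 = 1)
    (harec : ∀ n : ℕ, a (n + 1) = a n - (d / a n) * (b / σ) ^ 2) :
    ∃ n : ℕ, (∀ k ≤ n, 0 < a k) ∧ a (n + 1) ≤ 0 ∧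
      (n : ℝ) ≤ σ ^ 2 / (d * b ^ 2) ∧
      ∀ m : ℕ, ((∀ k ≤ m, 0 < a k) ∧ a (m + 1) ≤ 0) → n ≤ m := by
  set c := d * (b / σ) ^ 2 with hcdef
  have hc : 0 < c := by positivity
  -- key decay estimate
  have key : ∀ n : ℕ, (∀ k < n, 0 < a k) → a n ≤ 1 - n * c := by
    intro n
    induction n with
    | zero => intro _; simp [ha0]
    | succ m ih =>
      intro h
      have hm : ∀ k < m, 0 < a k := fun k hk => h k (hk.trans (Nat.lt_succ_self m))
      have ham : 0 < a m := h m (Nat.lt_succ_self m)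
      have h1 : a m ≤ 1 - m * c := ih hm
      have hmn : (0:ℝ) ≤ m := Nat.cast_nonneg m
      have ham1 : a m ≤ 1 := by nlinarith
      have heq : d / a m * (b / σ) ^ 2 = c / a m := by
        rw [hcdef]; field_simp
      have hdiv : c ≤ c / a m := by
        rw [le_div_iff₀ ham]; nlinarith
      have : a (m + 1) ≤ a m - c := by
        rw [harec m, heq]; linarith
      push_cast
      nlinarith
  -- existence of an index with nonpositive next value
  have hex : ∃ n : ℕ, a (n + 1) ≤ 0 := by
    by_contra hcon
    push_neg at hcon
    have hpos : ∀ k : ℕ, 0 < a k := by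
      intro k
      cases k with
      | zero => simp [ha0]
      | succ j => exact hcon j
    obtain ⟨n, hn⟩ := exists_nat_gt (1 / c)
    have := key n (fun k _ => hpos k)
    have h1c : 1 < n * c := by
      rw [div_lt_iff₀ hc] at hn; linarith
    have := hpos n
    linarith
  classical
  refine ⟨Nat.find hex, ?_, Nat.find_spec hex, ?_, ?_⟩
  · intro k hk
    cases k with
    | zero => simp [ha0]
    | succ j =>
      have hj : j < Nat.find hex := hk
      have := Nat.find_min hex hj
      push_neg at this
      exact this
  · -- the bound
    have hpos : ∀ k < Nat.find hex + 1, 0 < a k := by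
      intro k hk
      cases k with
      | zero => simp [ha0]
      | succ j =>
        have hj : j < Nat.find hex := by omega
        have := Nat.find_min hex hj
        push_neg at this
        exact this
    have h1 := key (Nat.find hex) (fun k hk => hpos k (by omega))
    have hpn : 0 < a (Nat.find hex) := hpos _ (by omega)
    have hnc : (Nat.find hex : ℝ) * c < 1 := by linarith
    have hσ2 : (0:ℝ) < σ ^ 2 := by positivity
    have hdb : (0:ℝ) < d * b ^ 2 := by positivity
    rw [le_div_iff₀ hdb]
    have hcval : c = d * b ^ 2 / σ ^ 2 := by rw [hcdef]; field_simp
    rw [hcval] at hnc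
    have h2 := mul_lt_mul_of_pos_right hnc hσ2
    rw [mul_assoc, div_mul_cancel₀ _ (ne_of_gt hσ2)] at h2
    linarith
  · intro m hm
    exact Nat.find_le hm.2
end

section
/- Fix reals b, σ with σ ≠ 0, d > 0 and T ≥ 2d. There exists τ̃ ∈ (0, d] such that for every τ ∈ (0, τ̃], the operator φ = (φ₁, φ₂, φ₃) maps the ball B_τ into itself. -/
open Set MeasureTheory

/-- Clamp `x` into `[a, b]`. -/
noncomputable def clampF (a b x : ℝ) : ℝ := max a (min b x)

lemma clampF_mem {a b : ℝ} (h : a ≤ b) (x : ℝ) : clampF a b x ∈ Icc a b :=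
  ⟨le_max_left _ _, max_le h (min_le_left _ _)⟩

lemma clampF_eq {a b x : ℝ} (hx : x ∈ Icc a b) : clampF a b x = x := by
  unfold clampF
  rw [min_eq_right hx.2, max_eq_right hx.1]

lemma continuous_clampF (a b : ℝ) : Continuous (clampF a b) :=
  continuous_const.max (continuous_const.min continuous_id)

lemma cont_both {X : Type*} [TopologicalSpace X]
    {F : X → ℝ → ℝ} (hF : Continuous fun q : X × ℝ => F q.1 q.2) {u v : X → ℝ}
    (hu : Continuous u) (hv : Continuous v) :
    Continuous fun p => ∫ x in u p..v p, F p x := by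
  have h1 : Continuous fun p => ∫ x in (0:ℝ)..v p, F p x :=
    intervalIntegral.continuous_parametric_intervalIntegral_of_continuous hF hv
  have h2 : Continuous fun p => ∫ x in (0:ℝ)..u p, F p x :=
    intervalIntegral.continuous_parametric_intervalIntegral_of_continuous hF hu
  have key : ∀ p, ∫ x in u p..v p, F p x =
      (∫ x in (0:ℝ)..v p, F p x) - ∫ x in (0:ℝ)..u p, F p x := by
    intro p
    have hc : Continuous (F p) := hF.comp (continuous_const.prodMk continuous_id)
    rw [intervalIntegral.integral_interval_sub_left (hc.intervalIntegrable _ _)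
      (hc.intervalIntegrable _ _)]
  exact (h1.sub h2).congr fun p => (key p).symm

lemma abs_intInt_le {f : ℝ → ℝ} {a b C τ : ℝ} (hC : 0 ≤ C) (hab : a ≤ b) (hba : b - a ≤ τ)
    (h : ∀ x, |f x| ≤ C) : |∫ x in a..b, f x| ≤ C * τ := by
  have h1 : ‖∫ x in a..b, f x‖ ≤ C * |b - a| :=
    intervalIntegral.norm_integral_le_of_norm_le_const fun x _ => h x
  rw [Real.norm_eq_abs] at h1
  have h2 : |b - a| ≤ τ := by rw [abs_of_nonneg (by linarith)]; exact hba
  exact h1.trans (mul_le_mul_of_nonneg_left h2 hC)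

/-- First component of the fixed-point operator `φ`. -/
noncomputable def phi1 (σ T d : ℝ) (ξ₂ : ℝ → ℝ → ℝ) (t : ℝ) : ℝ :=
  1 - (σ ^ 2)⁻¹ * ∫ x in t..(T - d), (ξ₂ x 0) ^ 2

/-- Second component of the fixed-point operator `φ`. -/
noncomputable def phi2 (b σ T d : ℝ) (ξ₂ : ℝ → ℝ → ℝ) (ξ₃ : ℝ → ℝ → ℝ → ℝ) (t s : ℝ) : ℝ :=
  b * phi1 σ T d ξ₂ (min (T - d) (t + s + d)) -
    (σ ^ 2)⁻¹ * ∫ x in t..(min (T - d) (t + s + d)), ξ₂ x 0 * ξ₃ x (t + s - x) 0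

/-- Third component of the fixed-point operator `φ`. -/
noncomputable def phi3 (b σ T d : ℝ) (ξ₂ : ℝ → ℝ → ℝ) (ξ₃ : ℝ → ℝ → ℝ → ℝ) (t s r : ℝ) : ℝ :=
  b * phi2 b σ T d ξ₂ ξ₃ (min (T - d) (t + min s r + d)) (|s - r| - d) -
    (σ ^ 2)⁻¹ * ∫ x in t..(min (T - d) (t + min s r + d)),
      ξ₃ x (t + s - x) 0 * ξ₃ x 0 (t + r - x)

/-- Membership in the ball `B_τ`: a triple of functions, continuous on the domain
`D_τ = [T-d-τ, T-d] × [-d,0]²`, satisfying `‖ξ₁ - 1‖_∞ ≤ 1/2`, `‖ξ₂ - b‖_∞ ≤ |b|/2`,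
`‖ξ₃ - b²‖_∞ ≤ b²/2`. -/
def memBall (b T d τ : ℝ) (ξ₁ : ℝ → ℝ) (ξ₂ : ℝ → ℝ → ℝ) (ξ₃ : ℝ → ℝ → ℝ → ℝ) : Prop :=
  ContinuousOn ξ₁ (Icc (T - d - τ) (T - d)) ∧
  ContinuousOn (fun p : ℝ × ℝ => ξ₂ p.1 p.2) (Icc (T - d - τ) (T - d) ×ˢ Icc (-d) 0) ∧
  ContinuousOn (fun p : ℝ × ℝ × ℝ => ξ₃ p.1 p.2.1 p.2.2)
    (Icc (T - d - τ) (T - d) ×ˢ Icc (-d) 0 ×ˢ Icc (-d) 0) ∧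
  (∀ t ∈ Icc (T - d - τ) (T - d), |ξ₁ t - 1| ≤ 1 / 2) ∧
  (∀ t ∈ Icc (T - d - τ) (T - d), ∀ s ∈ Icc (-d) 0, |ξ₂ t s - b| ≤ |b| / 2) ∧
  (∀ t ∈ Icc (T - d - τ) (T - d), ∀ s ∈ Icc (-d) 0, ∀ r ∈ Icc (-d) 0,
    |ξ₃ t s r - b ^ 2| ≤ b ^ 2 / 2)

/-- There exists `τ̃ ∈ (0, d]` such that for every `τ ∈ (0, τ̃]` the
operator `φ = (φ₁, φ₂, φ₃)` maps the ball `B_τ` into itself. -/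
theorem stmt_2 (b σ d T : ℝ) (hσ : σ ≠ 0) (hd : 0 < d) (hT : 2 * d ≤ T) :
    ∃ τmax : ℝ, 0 < τmax ∧ τmax ≤ d ∧
      ∀ τ : ℝ, 0 < τ → τ ≤ τmax →
        ∀ (ξ₁ : ℝ → ℝ) (ξ₂ : ℝ → ℝ → ℝ) (ξ₃ : ℝ → ℝ → ℝ → ℝ),
          memBall b T d τ ξ₁ ξ₂ ξ₃ →
            memBall b T d τ (phi1 σ T d ξ₂) (phi2 b σ T d ξ₂ ξ₃) (phi3 b σ T d ξ₂ ξ₃) := by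
  have hσ2 : (0:ℝ) < σ ^ 2 := by positivity
  refine ⟨min d (σ ^ 2 / (14 * b ^ 2 + 1)), lt_min hd (by positivity), min_le_left _ _,
    ?_⟩
  intro τ hτ0 hτm ξ₁ ξ₂ ξ₃ hξ
  obtain ⟨h1c, h2c, h3c, h1b, h2b, h3b⟩ := hξ
  have hτσ : τ * (14 * b ^ 2 + 1) ≤ σ ^ 2 := by
    have h := hτm.trans (min_le_right d (σ ^ 2 / (14 * b ^ 2 + 1)))
    rw [le_div_iff₀ (by positivity)] at h
    linarith
  have hAB : T - d - τ ≤ T - d := by linarith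
  have hd0 : (-d : ℝ) ≤ 0 := by linarith
  -- clamped extensions
  set g₂ : ℝ → ℝ → ℝ := fun x y => ξ₂ (clampF (T - d - τ) (T - d) x) (clampF (-d) 0 y)
    with hg₂def
  set g₃ : ℝ → ℝ → ℝ → ℝ := fun x y z =>
    ξ₃ (clampF (T - d - τ) (T - d) x) (clampF (-d) 0 y) (clampF (-d) 0 z) with hg₃def
  have hg2c : Continuous fun p : ℝ × ℝ => g₂ p.1 p.2 := by
    refine h2c.comp_continuous
      (((continuous_clampF _ _).comp continuous_fst).prodMk
        ((continuous_clampF _ _).comp continuous_snd)) fun p => ?_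
    exact ⟨clampF_mem hAB _, clampF_mem hd0 _⟩
  have hg3c : Continuous fun p : ℝ × ℝ × ℝ => g₃ p.1 p.2.1 p.2.2 := by
    refine h3c.comp_continuous
      (((continuous_clampF _ _).comp continuous_fst).prodMk
        ((((continuous_clampF _ _).comp (continuous_fst.comp continuous_snd)).prodMk
          ((continuous_clampF _ _).comp (continuous_snd.comp continuous_snd))))) fun p => ?_
    exact ⟨clampF_mem hAB _, clampF_mem hd0 _, clampF_mem hd0 _⟩
  have hg2eq : ∀ x ∈ Icc (T - d - τ) (T - d), ∀ y ∈ Icc (-d) (0:ℝ), g₂ x y = ξ₂ x y := by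
    intro x hx y hy
    rw [hg₂def]; simp only [clampF_eq hx, clampF_eq hy]
  have hg3eq : ∀ x ∈ Icc (T - d - τ) (T - d), ∀ y ∈ Icc (-d) (0:ℝ), ∀ z ∈ Icc (-d) (0:ℝ),
      g₃ x y z = ξ₃ x y z := by
    intro x hx y hy z hz
    rw [hg₃def]; simp only [clampF_eq hx, clampF_eq hy, clampF_eq hz]
  -- global bounds on the extensions
  have hg2b : ∀ x y, |g₂ x y - b| ≤ |b| / 2 := fun x y =>
    h2b _ (clampF_mem hAB _) _ (clampF_mem hd0 _)
  have hg3b : ∀ x y z, |g₃ x y z - b ^ 2| ≤ b ^ 2 / 2 := fun x y z =>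
    h3b _ (clampF_mem hAB _) _ (clampF_mem hd0 _) _ (clampF_mem hd0 _)
  have hg2a : ∀ x y, |g₂ x y| ≤ 3 * |b| / 2 := by
    intro x y
    have h := hg2b x y
    calc |g₂ x y| = |(g₂ x y - b) + b| := by ring_nf
      _ ≤ |g₂ x y - b| + |b| := abs_add_le _ _
      _ ≤ 3 * |b| / 2 := by linarith
  have hg3a : ∀ x y z, |g₃ x y z| ≤ 3 * b ^ 2 / 2 := by
    intro x y z
    have h := hg3b x y z
    have hb2 : |(b:ℝ) ^ 2| = b ^ 2 := abs_of_nonneg (by positivity)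
    calc |g₃ x y z| = |(g₃ x y z - b ^ 2) + b ^ 2| := by ring_nf
      _ ≤ |g₃ x y z - b ^ 2| + |b ^ 2| := abs_add_le _ _
      _ ≤ 3 * b ^ 2 / 2 := by rw [hb2]; linarith
  have h0mem : (0:ℝ) ∈ Icc (-d) (0:ℝ) := ⟨hd0, le_refl _⟩
  -- pointwise equality of the operators on the original data and on the extensions
  have e1 : ∀ t ∈ Icc (T - d - τ) (T - d), phi1 σ T d ξ₂ t = phi1 σ T d g₂ t := by
    intro t ht
    unfold phi1
    congr 2
    apply intervalIntegral.integral_congr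
    intro x hx
    rw [uIcc_of_le ht.2] at hx
    have hx1 : x ∈ Icc (T - d - τ) (T - d) := ⟨le_trans ht.1 hx.1, hx.2⟩
    simp only [hg2eq x hx1 0 h0mem]
  have e2 : ∀ t ∈ Icc (T - d - τ) (T - d), ∀ s ∈ Icc (-d) (0:ℝ),
      phi2 b σ T d ξ₂ ξ₃ t s = phi2 b σ T d g₂ g₃ t s := by
    intro t ht s hs
    have hm1 : t ≤ min (T - d) (t + s + d) := le_min ht.2 (by linarith [hs.1])
    have hm2 : min (T - d) (t + s + d) ≤ T - d := min_le_left _ _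
    have hmem : min (T - d) (t + s + d) ∈ Icc (T - d - τ) (T - d) :=
      ⟨le_trans ht.1 hm1, hm2⟩
    unfold phi2
    rw [e1 _ hmem]
    congr 2
    apply intervalIntegral.integral_congr
    intro x hx
    rw [uIcc_of_le hm1] at hx
    have hx3 : x ≤ t + s + d := le_trans hx.2 (min_le_right _ _)
    have hx1 : x ∈ Icc (T - d - τ) (T - d) := ⟨le_trans ht.1 hx.1, le_trans hx.2 hm2⟩
    have hx2 : t + s - x ∈ Icc (-d) (0:ℝ) := ⟨by linarith, by linarith [hx.1, hs.2]⟩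
    simp only [hg2eq x hx1 0 h0mem, hg3eq x hx1 _ hx2 0 h0mem]
  have e3 : ∀ t ∈ Icc (T - d - τ) (T - d), ∀ s ∈ Icc (-d) (0:ℝ), ∀ r ∈ Icc (-d) (0:ℝ),
      phi3 b σ T d ξ₂ ξ₃ t s r = phi3 b σ T d g₂ g₃ t s r := by
    intro t ht s hs r hr
    have hm1 : t ≤ min (T - d) (t + min s r + d) :=
      le_min ht.2 (by rcases min_cases s r with ⟨h, _⟩ | ⟨h, _⟩ <;> rw [h] <;>
        [linarith [hs.1]; linarith [hr.1]])
    have hm2 : min (T - d) (t + min s r + d) ≤ T - d := min_le_left _ _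
    have hmem : min (T - d) (t + min s r + d) ∈ Icc (T - d - τ) (T - d) :=
      ⟨le_trans ht.1 hm1, hm2⟩
    have habs : |s - r| - d ∈ Icc (-d) (0:ℝ) := by
      constructor
      · have : (0:ℝ) ≤ |s - r| := abs_nonneg _
        linarith
      · have : |s - r| ≤ d := by
          rw [abs_le]
          constructor <;> [linarith [hs.1, hr.2]; linarith [hs.2, hr.1]]
        linarith
    unfold phi3
    rw [e2 _ hmem _ habs]
    congr 2
    apply intervalIntegral.integral_congr
    intro x hx
    rw [uIcc_of_le hm1] at hx
    have hx3 : x ≤ t + min s r + d := le_trans hx.2 (min_le_right _ _)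
    have hxs : x ≤ t + s + d := le_trans hx3 (by have := min_le_left s r; linarith)
    have hxr : x ≤ t + r + d := le_trans hx3 (by have := min_le_right s r; linarith)
    have hx1 : x ∈ Icc (T - d - τ) (T - d) := ⟨le_trans ht.1 hx.1, le_trans hx.2 hm2⟩
    have hx2 : t + s - x ∈ Icc (-d) (0:ℝ) := ⟨by linarith, by linarith [hx.1, hs.2]⟩
    have hx4 : t + r - x ∈ Icc (-d) (0:ℝ) := ⟨by linarith, by linarith [hx.1, hr.2]⟩
    simp only [hg3eq x hx1 _ hx2 0 h0mem, hg3eq x hx1 0 h0mem _ hx4]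
  -- quantitative bounds for the extended operators
  have B1' : ∀ t ∈ Icc (T - d - τ) (T - d),
      |phi1 σ T d g₂ t - 1| ≤ (σ ^ 2)⁻¹ * (9 * b ^ 2 / 4 * τ) := by
    intro t ht
    have heq : phi1 σ T d g₂ t - 1 = -((σ ^ 2)⁻¹ * ∫ x in t..(T - d), (g₂ x 0) ^ 2) := by
      unfold phi1; ring
    rw [heq, abs_neg, abs_mul, abs_of_nonneg (inv_nonneg.mpr hσ2.le)]
    refine mul_le_mul_of_nonneg_left ?_ (inv_nonneg.mpr hσ2.le)
    refine abs_intInt_le (by positivity) ht.2 (by linarith [ht.1]) fun x => ?_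
    have h := hg2a x 0
    have h2 : |g₂ x 0| ^ 2 ≤ (3 * |b| / 2) ^ 2 := by nlinarith [abs_nonneg (g₂ x 0)]
    rw [abs_pow]
    nlinarith [sq_abs b]
  have B2' : ∀ t ∈ Icc (T - d - τ) (T - d), ∀ s ∈ Icc (-d) (0:ℝ),
      |phi2 b σ T d g₂ g₃ t s - b| ≤ (σ ^ 2)⁻¹ * (9 / 2 * |b| * b ^ 2 * τ) := by
    intro t ht s hs
    have hm1 : t ≤ min (T - d) (t + s + d) := le_min ht.2 (by linarith [hs.1])
    have hm2 : min (T - d) (t + s + d) ≤ T - d := min_le_left _ _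
    have hmem : min (T - d) (t + s + d) ∈ Icc (T - d - τ) (T - d) :=
      ⟨le_trans ht.1 hm1, hm2⟩
    have heq : phi2 b σ T d g₂ g₃ t s - b =
        b * (phi1 σ T d g₂ (min (T - d) (t + s + d)) - 1) -
          (σ ^ 2)⁻¹ * ∫ x in t..(min (T - d) (t + s + d)),
            g₂ x 0 * g₃ x (t + s - x) 0 := by
      unfold phi2; ring
    have hint : |∫ x in t..(min (T - d) (t + s + d)), g₂ x 0 * g₃ x (t + s - x) 0| ≤
        3 * |b| / 2 * (3 * b ^ 2 / 2) * τ := by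
      refine abs_intInt_le (by positivity) hm1 (by linarith [ht.1, hm2]) fun x => ?_
      rw [abs_mul]
      exact mul_le_mul (hg2a x 0) (hg3a x _ 0) (abs_nonneg _) (by positivity)
    calc |phi2 b σ T d g₂ g₃ t s - b|
        ≤ |b * (phi1 σ T d g₂ (min (T - d) (t + s + d)) - 1)| +
          |(σ ^ 2)⁻¹ * ∫ x in t..(min (T - d) (t + s + d)),
            g₂ x 0 * g₃ x (t + s - x) 0| := by rw [heq]; exact abs_sub _ _
      _ ≤ |b| * ((σ ^ 2)⁻¹ * (9 * b ^ 2 / 4 * τ)) +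
          (σ ^ 2)⁻¹ * (3 * |b| / 2 * (3 * b ^ 2 / 2) * τ) := by
          rw [abs_mul, abs_mul (σ ^ 2)⁻¹, abs_of_nonneg (inv_nonneg.mpr hσ2.le)]
          exact add_le_add (mul_le_mul_of_nonneg_left (B1' _ hmem) (abs_nonneg b))
            (mul_le_mul_of_nonneg_left hint (inv_nonneg.mpr hσ2.le))
      _ = (σ ^ 2)⁻¹ * ((9 * b ^ 2 / 4 * |b| + 3 * |b| / 2 * (3 * b ^ 2 / 2)) * τ) := by
          ring
      _ ≤ (σ ^ 2)⁻¹ * (9 / 2 * |b| * b ^ 2 * τ) := by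
          refine mul_le_mul_of_nonneg_left (le_of_eq ?_) (inv_nonneg.mpr hσ2.le)
          ring
  have B3' : ∀ t ∈ Icc (T - d - τ) (T - d), ∀ s ∈ Icc (-d) (0:ℝ), ∀ r ∈ Icc (-d) (0:ℝ),
      |phi3 b σ T d g₂ g₃ t s r - b ^ 2| ≤ (σ ^ 2)⁻¹ * (27 / 4 * b ^ 4 * τ) := by
    intro t ht s hs r hr
    have hm1 : t ≤ min (T - d) (t + min s r + d) :=
      le_min ht.2 (by rcases min_cases s r with ⟨h, _⟩ | ⟨h, _⟩ <;> rw [h] <;>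
        [linarith [hs.1]; linarith [hr.1]])
    have hm2 : min (T - d) (t + min s r + d) ≤ T - d := min_le_left _ _
    have hmem : min (T - d) (t + min s r + d) ∈ Icc (T - d - τ) (T - d) :=
      ⟨le_trans ht.1 hm1, hm2⟩
    have habs : |s - r| - d ∈ Icc (-d) (0:ℝ) := by
      constructor
      · have : (0:ℝ) ≤ |s - r| := abs_nonneg _
        linarith
      · have : |s - r| ≤ d := by
          rw [abs_le]
          constructor <;> [linarith [hs.1, hr.2]; linarith [hs.2, hr.1]]
        linarith
    have heq : phi3 b σ T d g₂ g₃ t s r - b ^ 2 =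
        b * (phi2 b σ T d g₂ g₃ (min (T - d) (t + min s r + d)) (|s - r| - d) - b) -
          (σ ^ 2)⁻¹ * ∫ x in t..(min (T - d) (t + min s r + d)),
            g₃ x (t + s - x) 0 * g₃ x 0 (t + r - x) := by
      unfold phi3; ring
    have hint : |∫ x in t..(min (T - d) (t + min s r + d)),
        g₃ x (t + s - x) 0 * g₃ x 0 (t + r - x)| ≤
        3 * b ^ 2 / 2 * (3 * b ^ 2 / 2) * τ := by
      refine abs_intInt_le (by positivity) hm1 (by linarith [ht.1, hm2]) fun x => ?_
      rw [abs_mul]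
      exact mul_le_mul (hg3a x _ 0) (hg3a x 0 _) (abs_nonneg _) (by positivity)
    calc |phi3 b σ T d g₂ g₃ t s r - b ^ 2|
        ≤ |b * (phi2 b σ T d g₂ g₃ (min (T - d) (t + min s r + d)) (|s - r| - d) - b)| +
          |(σ ^ 2)⁻¹ * ∫ x in t..(min (T - d) (t + min s r + d)),
            g₃ x (t + s - x) 0 * g₃ x 0 (t + r - x)| := by rw [heq]; exact abs_sub _ _
      _ ≤ |b| * ((σ ^ 2)⁻¹ * (9 / 2 * |b| * b ^ 2 * τ)) +
          (σ ^ 2)⁻¹ * (3 * b ^ 2 / 2 * (3 * b ^ 2 / 2) * τ) := by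
          rw [abs_mul, abs_mul (σ ^ 2)⁻¹, abs_of_nonneg (inv_nonneg.mpr hσ2.le)]
          exact add_le_add (mul_le_mul_of_nonneg_left (B2' _ hmem _ habs) (abs_nonneg b))
            (mul_le_mul_of_nonneg_left hint (inv_nonneg.mpr hσ2.le))
      _ ≤ (σ ^ 2)⁻¹ * (27 / 4 * b ^ 4 * τ) := by
          have hb : |b| * |b| = b ^ 2 := by rw [← abs_mul, abs_mul_self]; ring
          have heq2 : |b| * ((σ ^ 2)⁻¹ * (9 / 2 * |b| * b ^ 2 * τ)) +
              (σ ^ 2)⁻¹ * (3 * b ^ 2 / 2 * (3 * b ^ 2 / 2) * τ) =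
              (σ ^ 2)⁻¹ * ((9 / 2 * (|b| * |b|) * b ^ 2 + 9 / 4 * b ^ 4) * τ) := by ring
          rw [heq2, hb]
          refine mul_le_mul_of_nonneg_left (le_of_eq ?_) (inv_nonneg.mpr hσ2.le)
          ring
  -- continuity of the extended operators
  have C1 : Continuous (phi1 σ T d g₂) := by
    unfold phi1
    refine continuous_const.sub (continuous_const.mul ?_)
    exact cont_both (F := fun _ x => (g₂ x 0) ^ 2)
      (((hg2c.comp (continuous_snd.prodMk continuous_const))).pow 2)
      continuous_id continuous_const
  have C2 : Continuous fun p : ℝ × ℝ => phi2 b σ T d g₂ g₃ p.1 p.2 := by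
    unfold phi2
    have hmin : Continuous fun p : ℝ × ℝ => min (T - d) (p.1 + p.2 + d) :=
      continuous_const.min (((continuous_fst.add continuous_snd)).add continuous_const)
    refine ((continuous_const.mul (C1.comp hmin))).sub (continuous_const.mul ?_)
    refine cont_both (F := fun p : ℝ × ℝ => fun x => g₂ x 0 * g₃ x (p.1 + p.2 - x) 0)
      ?_ continuous_fst hmin
    exact (hg2c.comp (continuous_snd.prodMk continuous_const)).mul
      (hg3c.comp (continuous_snd.prodMk
        ((((continuous_fst.comp continuous_fst).add
          (continuous_snd.comp continuous_fst)).sub continuous_snd).prodMk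
          continuous_const)))
  have C3 : Continuous fun p : ℝ × ℝ × ℝ => phi3 b σ T d g₂ g₃ p.1 p.2.1 p.2.2 := by
    unfold phi3
    have hmin : Continuous fun p : ℝ × ℝ × ℝ =>
        min (T - d) (p.1 + min p.2.1 p.2.2 + d) :=
      continuous_const.min ((continuous_fst.add
        ((continuous_fst.comp continuous_snd).min
          (continuous_snd.comp continuous_snd))).add continuous_const)
    have habs : Continuous fun p : ℝ × ℝ × ℝ => |p.2.1 - p.2.2| - d :=
      (((continuous_fst.comp continuous_snd).sub
        (continuous_snd.comp continuous_snd)).abs).sub continuous_const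
    refine (continuous_const.mul (C2.comp (hmin.prodMk habs))).sub
      (continuous_const.mul ?_)
    refine cont_both (F := fun p : ℝ × ℝ × ℝ => fun x =>
      g₃ x (p.1 + p.2.1 - x) 0 * g₃ x 0 (p.1 + p.2.2 - x)) ?_ continuous_fst hmin
    refine Continuous.mul ?_ ?_
    · exact hg3c.comp (continuous_snd.prodMk
        (((((continuous_fst.comp continuous_fst).add
          ((continuous_fst.comp continuous_snd).comp continuous_fst)).sub
          continuous_snd)).prodMk continuous_const))
    · exact hg3c.comp (continuous_snd.prodMk
        (continuous_const.prodMk ((((continuous_fst.comp continuous_fst).add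
          ((continuous_snd.comp continuous_snd).comp continuous_fst)).sub
          continuous_snd))))
  -- size of the final constants
  have hfin1 : (σ ^ 2)⁻¹ * (9 * b ^ 2 / 4 * τ) ≤ 1 / 2 := by
    rw [inv_mul_le_iff₀ hσ2]
    nlinarith [sq_nonneg b, hτ0.le]
  have hfin2 : (σ ^ 2)⁻¹ * (9 / 2 * |b| * b ^ 2 * τ) ≤ |b| / 2 := by
    rw [inv_mul_le_iff₀ hσ2]
    nlinarith [sq_nonneg b, hτ0.le, abs_nonneg b, sq_abs b,
      mul_nonneg (mul_nonneg (abs_nonneg b) (sq_nonneg b)) hτ0.le,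
      mul_le_mul_of_nonneg_left hτσ (abs_nonneg b)]
  have hfin3 : (σ ^ 2)⁻¹ * (27 / 4 * b ^ 4 * τ) ≤ b ^ 2 / 2 := by
    rw [inv_mul_le_iff₀ hσ2]
    nlinarith [sq_nonneg b, hτ0.le, mul_le_mul_of_nonneg_left hτσ (sq_nonneg b)]
  -- assemble
  refine ⟨?_, ?_, ?_, ?_, ?_, ?_⟩
  · exact C1.continuousOn.congr e1
  · refine (C2.continuousOn).congr ?_
    intro p hp
    rw [mem_prod] at hp
    exact e2 _ hp.1 _ hp.2
  · refine (C3.continuousOn).congr ?_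
    intro p hp
    rw [mem_prod] at hp
    rw [mem_prod] at hp
    exact e3 _ hp.1 _ hp.2.1 _ hp.2.2
  · intro t ht
    rw [e1 t ht]
    exact (B1' t ht).trans hfin1
  · intro t ht s hs
    rw [e2 t ht s hs]
    exact (B2' t ht s hs).trans hfin2
  · intro t ht s hs r hr
    rw [e3 t ht s hs r hr]
    exact (B3' t ht s hs r hr).trans hfin3
end

section
/- Fix reals b, σ with σ ≠ 0, d > 0 and T ≥ 2d. There exists a constant m > 0, depending only on b and σ, such that for every τ ∈ (0, d] and all triples ξ, ξ' in the ball B_τ, one has ‖φ(ξ) − φ(ξ')‖ ≤ τ·m·‖ξ − ξ'‖, where ‖·‖ denotes the sum of the sup norms of the three components. -/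
open Set MeasureTheory

/-- Sup norm of a one-variable function on `[T-d-τ, T-d]`. -/
noncomputable def supNorm1 (T d τ : ℝ) (f : ℝ → ℝ) : ℝ :=
  sSup ((fun t => |f t|) '' Icc (T - d - τ) (T - d))

/-- Sup norm of a two-variable function on `[T-d-τ, T-d] × [-d,0]`. -/
noncomputable def supNorm2 (T d τ : ℝ) (f : ℝ → ℝ → ℝ) : ℝ :=
  sSup ((fun p : ℝ × ℝ => |f p.1 p.2|) '' (Icc (T - d - τ) (T - d) ×ˢ Icc (-d) 0))

/-- Sup norm of a three-variable function on `[T-d-τ, T-d] × [-d,0]²`. -/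
noncomputable def supNorm3 (T d τ : ℝ) (f : ℝ → ℝ → ℝ → ℝ) : ℝ :=
  sSup ((fun p : ℝ × ℝ × ℝ => |f p.1 p.2.1 p.2.2|) ''
    (Icc (T - d - τ) (T - d) ×ˢ Icc (-d) 0 ×ˢ Icc (-d) 0))

lemma abs_sub'' (x y : ℝ) : |x - y| ≤ |x| + |y| := by
  rw [sub_eq_add_neg]
  exact (abs_add_le _ _).trans (by rw [abs_neg])

lemma abs_le_of_abs_sub_le' {y c e : ℝ} (h : |y - c| ≤ e) : |y| ≤ |c| + e := by
  have := abs_sub_abs_le_abs_sub y c; linarith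

lemma int_diff_bound (f g : ℝ → ℝ) (a c C : ℝ) (hac : a ≤ c)
    (hf : IntervalIntegrable f MeasureTheory.volume a c)
    (hg : IntervalIntegrable g MeasureTheory.volume a c)
    (h : ∀ x ∈ Icc a c, |f x - g x| ≤ C) :
    |(∫ x in a..c, f x) - ∫ x in a..c, g x| ≤ C * (c - a) := by
  rw [← intervalIntegral.integral_sub hf hg]
  have h2 : ∀ x ∈ Set.uIoc a c, ‖f x - g x‖ ≤ C := by
    intro x hx
    rw [Set.uIoc_of_le hac] at hx
    exact h x ⟨le_of_lt hx.1, hx.2⟩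
  have := intervalIntegral.norm_integral_le_of_norm_le_const h2
  rwa [Real.norm_eq_abs, abs_of_nonneg (sub_nonneg.mpr hac)] at this


set_option maxHeartbeats 1000000 in
/-- There is a constant `m > 0` depending only on `b` and `σ` so that for
every `τ ∈ (0,d]` the operator `φ` is `τ m`-Lipschitz on the ball `B_τ` for the norm given
by the sum of the sup norms of the three components. -/
theorem stmt_3 (b σ : ℝ) (hσ : σ ≠ 0) :
    ∃ m : ℝ, 0 < m ∧
      ∀ d T τ : ℝ, 0 < d → 2 * d ≤ T → 0 < τ → τ ≤ d →
        ∀ (ξ₁ : ℝ → ℝ) (ξ₂ : ℝ → ℝ → ℝ) (ξ₃ : ℝ → ℝ → ℝ → ℝ)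
          (ξ₁' : ℝ → ℝ) (ξ₂' : ℝ → ℝ → ℝ) (ξ₃' : ℝ → ℝ → ℝ → ℝ),
          memBall b T d τ ξ₁ ξ₂ ξ₃ → memBall b T d τ ξ₁' ξ₂' ξ₃' →
            supNorm1 T d τ (fun t => phi1 σ T d ξ₂ t - phi1 σ T d ξ₂' t) +
              supNorm2 T d τ (fun t s => phi2 b σ T d ξ₂ ξ₃ t s - phi2 b σ T d ξ₂' ξ₃' t s) +
              supNorm3 T d τ
                (fun t s r => phi3 b σ T d ξ₂ ξ₃ t s r - phi3 b σ T d ξ₂' ξ₃' t s r) ≤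
            τ * m * (supNorm1 T d τ (fun t => ξ₁ t - ξ₁' t) +
              supNorm2 T d τ (fun t s => ξ₂ t s - ξ₂' t s) +
              supNorm3 T d τ (fun t s r => ξ₃ t s r - ξ₃' t s r)) := by
  refine ⟨(σ ^ 2)⁻¹ * (20 * (1 + |b|) ^ 3) + 1, by positivity, ?_⟩
  intro d T τ hd hT hτ hτd ξ₁ ξ₂ ξ₃ ξ₁' ξ₂' ξ₃' hB hB'
  obtain ⟨hc1, hc2, hc3, hball1, hball2, hball3⟩ := hB
  obtain ⟨hc1', hc2', hc3', hball1', hball2', hball3'⟩ := hB'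
  set K := (σ ^ 2)⁻¹ with hKdef
  have hK : 0 < K := by positivity
  set I : Set ℝ := Icc (T - d - τ) (T - d) with hIdef
  set J : Set ℝ := Icc (-d) 0 with hJdef
  have hIne : T - d - τ ≤ T - d := by linarith
  have h0J : (0 : ℝ) ∈ J := ⟨by linarith, le_refl 0⟩
  have hTI : T - d ∈ I := ⟨hIne, le_refl _⟩
  have ha : 0 ≤ |b| := abs_nonneg b
  set P := |b| + |b| / 2 with hPdef
  set Q := b ^ 2 + b ^ 2 / 2 with hQdef
  have hP : 0 ≤ P := by positivity
  have hQ : 0 ≤ Q := by positivity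
  -- value bounds
  have hval2 : ∀ t ∈ I, ∀ s ∈ J, |ξ₂ t s| ≤ P :=
    fun t ht s hs => abs_le_of_abs_sub_le' (hball2 t ht s hs)
  have hval2' : ∀ t ∈ I, ∀ s ∈ J, |ξ₂' t s| ≤ P :=
    fun t ht s hs => abs_le_of_abs_sub_le' (hball2' t ht s hs)
  have hval3 : ∀ t ∈ I, ∀ s ∈ J, ∀ r ∈ J, |ξ₃ t s r| ≤ Q := by
    intro t ht s hs r hr
    have := abs_le_of_abs_sub_le' (hball3 t ht s hs r hr)
    rwa [abs_of_nonneg (sq_nonneg b)] at this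
  have hval3' : ∀ t ∈ I, ∀ s ∈ J, ∀ r ∈ J, |ξ₃' t s r| ≤ Q := by
    intro t ht s hs r hr
    have := abs_le_of_abs_sub_le' (hball3' t ht s hs r hr)
    rwa [abs_of_nonneg (sq_nonneg b)] at this
  -- the norms of the differences
  set N₁ := supNorm1 T d τ (fun t => ξ₁ t - ξ₁' t) with hN₁def
  set N₂ := supNorm2 T d τ (fun t s => ξ₂ t s - ξ₂' t s) with hN₂def
  set N₃ := supNorm3 T d τ (fun t s r => ξ₃ t s r - ξ₃' t s r) with hN₃def
  have bdd2 : BddAbove ((fun p : ℝ × ℝ => |ξ₂ p.1 p.2 - ξ₂' p.1 p.2|) '' (I ×ˢ J)) := by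
    refine ⟨2 * P, ?_⟩
    rintro y ⟨⟨t, s⟩, ⟨ht, hs⟩, rfl⟩
    have h1 := hval2 t ht s hs
    have h2 := hval2' t ht s hs
    have h3 := abs_sub'' (ξ₂ t s) (ξ₂' t s)
    simp only
    linarith
  have bdd3 : BddAbove ((fun p : ℝ × ℝ × ℝ => |ξ₃ p.1 p.2.1 p.2.2 - ξ₃' p.1 p.2.1 p.2.2|) ''
      (I ×ˢ J ×ˢ J)) := by
    refine ⟨2 * Q, ?_⟩
    rintro y ⟨⟨t, s, r⟩, ⟨ht, hs, hr⟩, rfl⟩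
    have h1 := hval3 t ht s hs r hr
    have h2 := hval3' t ht s hs r hr
    have h3 := abs_sub'' (ξ₃ t s r) (ξ₃' t s r)
    simp only
    linarith
  have hN₂le : ∀ t ∈ I, ∀ s ∈ J, |ξ₂ t s - ξ₂' t s| ≤ N₂ := by
    intro t ht s hs
    exact le_csSup bdd2 ⟨(t, s), ⟨ht, hs⟩, rfl⟩
  have hN₃le : ∀ t ∈ I, ∀ s ∈ J, ∀ r ∈ J, |ξ₃ t s r - ξ₃' t s r| ≤ N₃ := by
    intro t ht s hs r hr
    exact le_csSup bdd3 ⟨(t, s, r), ⟨ht, hs, hr⟩, rfl⟩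
  have hN₁nn : 0 ≤ N₁ := Real.sSup_nonneg (by rintro y ⟨t, ht, rfl⟩; exact abs_nonneg _)
  have hN₂nn : 0 ≤ N₂ := Real.sSup_nonneg (by rintro y ⟨p, hp, rfl⟩; exact abs_nonneg _)
  have hN₃nn : 0 ≤ N₃ := Real.sSup_nonneg (by rintro y ⟨p, hp, rfl⟩; exact abs_nonneg _)
  -- continuity of x ↦ ξ₂ x 0 on I
  have c20 : ContinuousOn (fun x : ℝ => ξ₂ x 0) I :=
    hc2.comp (by fun_prop) (fun x hx => Set.mk_mem_prod hx h0J)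
  have c20' : ContinuousOn (fun x : ℝ => ξ₂' x 0) I :=
    hc2'.comp (by fun_prop) (fun x hx => Set.mk_mem_prod hx h0J)
  -- bound constants
  set B₁ := K * (2 * P * N₂) * τ with hB₁def
  set B₂ := |b| * B₁ + K * (Q * N₂ + P * N₃) * τ with hB₂def
  set B₃ := |b| * B₂ + K * (2 * Q * N₃) * τ with hB₃def
  -- Step 1: pointwise bound for phi1 difference
  have h1 : ∀ t ∈ I, |phi1 σ T d ξ₂ t - phi1 σ T d ξ₂' t| ≤ B₁ := by
    intro t ht
    have htT : t ≤ T - d := ht.2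
    have hsub : Icc t (T - d) ⊆ I := fun x hx => ⟨le_trans ht.1 hx.1, hx.2⟩
    have hf : IntervalIntegrable (fun x => ξ₂ x 0 ^ 2) volume t (T - d) := by
      apply ContinuousOn.intervalIntegrable
      rw [uIcc_of_le htT]
      exact (c20.mono hsub).pow 2
    have hg : IntervalIntegrable (fun x => ξ₂' x 0 ^ 2) volume t (T - d) := by
      apply ContinuousOn.intervalIntegrable
      rw [uIcc_of_le htT]
      exact (c20'.mono hsub).pow 2
    have hpt : ∀ x ∈ Icc t (T - d), |ξ₂ x 0 ^ 2 - ξ₂' x 0 ^ 2| ≤ 2 * P * N₂ := by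
      intro x hx
      have hxI : x ∈ I := hsub hx
      have e : ξ₂ x 0 ^ 2 - ξ₂' x 0 ^ 2 = (ξ₂ x 0 + ξ₂' x 0) * (ξ₂ x 0 - ξ₂' x 0) := by ring
      rw [e, abs_mul]
      have hsum : |ξ₂ x 0 + ξ₂' x 0| ≤ 2 * P :=
        (abs_add_le _ _).trans (by linarith [hval2 x hxI 0 h0J, hval2' x hxI 0 h0J])
      exact mul_le_mul hsum (hN₂le x hxI 0 h0J) (abs_nonneg _) (by positivity)
    have key := int_diff_bound _ _ t (T - d) (2 * P * N₂) htT hf hg hpt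
    have e : phi1 σ T d ξ₂ t - phi1 σ T d ξ₂' t =
        K * ((∫ x in t..(T - d), ξ₂' x 0 ^ 2) - ∫ x in t..(T - d), ξ₂ x 0 ^ 2) := by
      simp only [phi1, ← hKdef]; ring
    rw [e, abs_mul, abs_of_pos hK, abs_sub_comm]
    have hlen : T - d - t ≤ τ := by linarith [ht.1]
    calc K * |(∫ x in t..(T - d), ξ₂ x 0 ^ 2) - ∫ x in t..(T - d), ξ₂' x 0 ^ 2|
        ≤ K * (2 * P * N₂ * (T - d - t)) := by
          exact mul_le_mul_of_nonneg_left key hK.le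
      _ ≤ B₁ := by
          rw [hB₁def]
          have : 2 * P * N₂ * (T - d - t) ≤ 2 * P * N₂ * τ :=
            mul_le_mul_of_nonneg_left hlen (by positivity)
          nlinarith [hK.le]
  -- Step 2: pointwise bound for phi2 difference
  have h2 : ∀ t ∈ I, ∀ s ∈ J, |phi2 b σ T d ξ₂ ξ₃ t s - phi2 b σ T d ξ₂' ξ₃' t s| ≤ B₂ := by
    intro t ht s hs
    set u := min (T - d) (t + s + d) with hudef
    have htu : t ≤ u := le_min ht.2 (by linarith [hs.1])
    have huT : u ≤ T - d := min_le_left _ _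
    have husd : u ≤ t + s + d := min_le_right _ _
    have huI : u ∈ I := ⟨le_trans ht.1 htu, huT⟩
    have hsub : Icc t u ⊆ I := fun x hx => ⟨le_trans ht.1 hx.1, le_trans hx.2 huT⟩
    have hmem : ∀ x ∈ Icc t u, x ∈ I ∧ t + s - x ∈ J := by
      intro x hx
      exact ⟨hsub hx, ⟨by linarith [hx.2], by linarith [hx.1, hs.2]⟩⟩
    have hmap1 : ContinuousOn (fun x : ℝ => (x, t + s - x, (0:ℝ))) (Icc t u) := by fun_prop
    have hmapsto1 : Set.MapsTo (fun x : ℝ => (x, t + s - x, (0:ℝ))) (Icc t u) (I ×ˢ J ×ˢ J) :=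
      fun x hx => ⟨(hmem x hx).1, (hmem x hx).2, h0J⟩
    have hcont : ContinuousOn (fun x => ξ₂ x 0 * ξ₃ x (t + s - x) 0) (Icc t u) := by
      apply ContinuousOn.mul (c20.mono hsub)
      exact hc3.comp hmap1 hmapsto1
    have hcont' : ContinuousOn (fun x => ξ₂' x 0 * ξ₃' x (t + s - x) 0) (Icc t u) := by
      apply ContinuousOn.mul (c20'.mono hsub)
      exact hc3'.comp hmap1 hmapsto1
    have hf : IntervalIntegrable (fun x => ξ₂ x 0 * ξ₃ x (t + s - x) 0) volume t u := by
      apply ContinuousOn.intervalIntegrable; rwa [uIcc_of_le htu]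
    have hg : IntervalIntegrable (fun x => ξ₂' x 0 * ξ₃' x (t + s - x) 0) volume t u := by
      apply ContinuousOn.intervalIntegrable; rwa [uIcc_of_le htu]
    have hpt : ∀ x ∈ Icc t u,
        |ξ₂ x 0 * ξ₃ x (t + s - x) 0 - ξ₂' x 0 * ξ₃' x (t + s - x) 0| ≤ Q * N₂ + P * N₃ := by
      intro x hx
      obtain ⟨hxI, hxJ⟩ := hmem x hx
      have e : ξ₂ x 0 * ξ₃ x (t + s - x) 0 - ξ₂' x 0 * ξ₃' x (t + s - x) 0 =
          (ξ₂ x 0 - ξ₂' x 0) * ξ₃ x (t + s - x) 0 +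
            ξ₂' x 0 * (ξ₃ x (t + s - x) 0 - ξ₃' x (t + s - x) 0) := by ring
      rw [e]
      refine (abs_add_le _ _).trans ?_
      rw [abs_mul, abs_mul]
      have b1 := mul_le_mul (hN₂le x hxI 0 h0J) (hval3 x hxI _ hxJ 0 h0J) (abs_nonneg _) hN₂nn
      have b2 := mul_le_mul (hval2' x hxI 0 h0J) (hN₃le x hxI _ hxJ 0 h0J) (abs_nonneg _) hP
      linarith
    have key := int_diff_bound _ _ t u (Q * N₂ + P * N₃) htu hf hg hpt
    have e : phi2 b σ T d ξ₂ ξ₃ t s - phi2 b σ T d ξ₂' ξ₃' t s =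
        b * (phi1 σ T d ξ₂ u - phi1 σ T d ξ₂' u) -
          K * ((∫ x in t..u, ξ₂ x 0 * ξ₃ x (t + s - x) 0) -
            ∫ x in t..u, ξ₂' x 0 * ξ₃' x (t + s - x) 0) := by
      simp only [phi2, ← hKdef, ← hudef]; ring
    rw [e]
    have hlen : u - t ≤ τ := by linarith [ht.1]
    calc |b * (phi1 σ T d ξ₂ u - phi1 σ T d ξ₂' u) -
          K * ((∫ x in t..u, ξ₂ x 0 * ξ₃ x (t + s - x) 0) -
            ∫ x in t..u, ξ₂' x 0 * ξ₃' x (t + s - x) 0)|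
        ≤ |b * (phi1 σ T d ξ₂ u - phi1 σ T d ξ₂' u)| +
          |K * ((∫ x in t..u, ξ₂ x 0 * ξ₃ x (t + s - x) 0) -
            ∫ x in t..u, ξ₂' x 0 * ξ₃' x (t + s - x) 0)| := abs_sub'' _ _
      _ ≤ |b| * B₁ + K * ((Q * N₂ + P * N₃) * τ) := by
          rw [abs_mul, abs_mul, abs_of_pos hK]
          refine add_le_add (mul_le_mul_of_nonneg_left (h1 u huI) ha) ?_
          refine mul_le_mul_of_nonneg_left (key.trans ?_) hK.le
          exact mul_le_mul_of_nonneg_left hlen (by positivity)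
      _ = B₂ := by rw [hB₂def]; ring
  -- Step 3: pointwise bound for phi3 difference
  have h3 : ∀ t ∈ I, ∀ s ∈ J, ∀ r ∈ J,
      |phi3 b σ T d ξ₂ ξ₃ t s r - phi3 b σ T d ξ₂' ξ₃' t s r| ≤ B₃ := by
    intro t ht s hs r hr
    set u := min (T - d) (t + min s r + d) with hudef
    have hmsr : -d ≤ min s r := le_min hs.1 hr.1
    have htu : t ≤ u := le_min ht.2 (by linarith)
    have huT : u ≤ T - d := min_le_left _ _
    have husd : u ≤ t + min s r + d := min_le_right _ _
    have huI : u ∈ I := ⟨le_trans ht.1 htu, huT⟩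
    have hvJ : |s - r| - d ∈ J := by
      constructor
      · have := abs_nonneg (s - r); linarith
      · have : |s - r| ≤ d := abs_le.mpr ⟨by linarith [hs.1, hr.2], by linarith [hs.2, hr.1]⟩
        linarith
    have hsub : Icc t u ⊆ I := fun x hx => ⟨le_trans ht.1 hx.1, le_trans hx.2 huT⟩
    have hmem : ∀ x ∈ Icc t u, x ∈ I ∧ t + s - x ∈ J ∧ t + r - x ∈ J := by
      intro x hx
      refine ⟨hsub hx, ⟨?_, ?_⟩, ⟨?_, ?_⟩⟩
      · have : min s r ≤ s := min_le_left _ _; linarith [hx.2]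
      · linarith [hx.1, hs.2]
      · have : min s r ≤ r := min_le_right _ _; linarith [hx.2]
      · linarith [hx.1, hr.2]
    have hmap1 : ContinuousOn (fun x : ℝ => (x, t + s - x, (0:ℝ))) (Icc t u) := by fun_prop
    have hmap2 : ContinuousOn (fun x : ℝ => (x, (0:ℝ), t + r - x)) (Icc t u) := by fun_prop
    have hmapsto1 : Set.MapsTo (fun x : ℝ => (x, t + s - x, (0:ℝ))) (Icc t u) (I ×ˢ J ×ˢ J) :=
      fun x hx => ⟨(hmem x hx).1, (hmem x hx).2.1, h0J⟩
    have hmapsto2 : Set.MapsTo (fun x : ℝ => (x, (0:ℝ), t + r - x)) (Icc t u) (I ×ˢ J ×ˢ J) :=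
      fun x hx => ⟨(hmem x hx).1, h0J, (hmem x hx).2.2⟩
    have hcont : ContinuousOn (fun x => ξ₃ x (t + s - x) 0 * ξ₃ x 0 (t + r - x)) (Icc t u) :=
      (hc3.comp hmap1 hmapsto1).mul (hc3.comp hmap2 hmapsto2)
    have hcont' : ContinuousOn (fun x => ξ₃' x (t + s - x) 0 * ξ₃' x 0 (t + r - x)) (Icc t u) :=
      (hc3'.comp hmap1 hmapsto1).mul (hc3'.comp hmap2 hmapsto2)
    have hf : IntervalIntegrable (fun x => ξ₃ x (t + s - x) 0 * ξ₃ x 0 (t + r - x)) volume t u := by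
      apply ContinuousOn.intervalIntegrable; rwa [uIcc_of_le htu]
    have hg : IntervalIntegrable (fun x => ξ₃' x (t + s - x) 0 * ξ₃' x 0 (t + r - x)) volume t u := by
      apply ContinuousOn.intervalIntegrable; rwa [uIcc_of_le htu]
    have hpt : ∀ x ∈ Icc t u,
        |ξ₃ x (t + s - x) 0 * ξ₃ x 0 (t + r - x) - ξ₃' x (t + s - x) 0 * ξ₃' x 0 (t + r - x)| ≤
          2 * Q * N₃ := by
      intro x hx
      obtain ⟨hxI, hxJ1, hxJ2⟩ := hmem x hx
      have e : ξ₃ x (t + s - x) 0 * ξ₃ x 0 (t + r - x) -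
          ξ₃' x (t + s - x) 0 * ξ₃' x 0 (t + r - x) =
          (ξ₃ x (t + s - x) 0 - ξ₃' x (t + s - x) 0) * ξ₃ x 0 (t + r - x) +
            ξ₃' x (t + s - x) 0 * (ξ₃ x 0 (t + r - x) - ξ₃' x 0 (t + r - x)) := by ring
      rw [e]
      refine (abs_add_le _ _).trans ?_
      rw [abs_mul, abs_mul]
      have b1 := mul_le_mul (hN₃le x hxI _ hxJ1 0 h0J) (hval3 x hxI 0 h0J _ hxJ2)
        (abs_nonneg _) hN₃nn
      have b2 := mul_le_mul (hval3' x hxI _ hxJ1 0 h0J) (hN₃le x hxI 0 h0J _ hxJ2)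
        (abs_nonneg _) hQ
      linarith
    have key := int_diff_bound _ _ t u (2 * Q * N₃) htu hf hg hpt
    have e : phi3 b σ T d ξ₂ ξ₃ t s r - phi3 b σ T d ξ₂' ξ₃' t s r =
        b * (phi2 b σ T d ξ₂ ξ₃ u (|s - r| - d) - phi2 b σ T d ξ₂' ξ₃' u (|s - r| - d)) -
          K * ((∫ x in t..u, ξ₃ x (t + s - x) 0 * ξ₃ x 0 (t + r - x)) -
            ∫ x in t..u, ξ₃' x (t + s - x) 0 * ξ₃' x 0 (t + r - x)) := by
      simp only [phi3, ← hKdef, ← hudef]; ring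
    rw [e]
    have hlen : u - t ≤ τ := by linarith [ht.1]
    refine (abs_sub'' _ _).trans ?_
    rw [abs_mul, abs_mul, abs_of_pos hK]
    have t1 : |b| * |phi2 b σ T d ξ₂ ξ₃ u (|s - r| - d) - phi2 b σ T d ξ₂' ξ₃' u (|s - r| - d)| ≤
        |b| * B₂ := mul_le_mul_of_nonneg_left (h2 u huI _ hvJ) ha
    have t2 : K * |(∫ x in t..u, ξ₃ x (t + s - x) 0 * ξ₃ x 0 (t + r - x)) -
        ∫ x in t..u, ξ₃' x (t + s - x) 0 * ξ₃' x 0 (t + r - x)| ≤ K * (2 * Q * N₃ * τ) := by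
      refine mul_le_mul_of_nonneg_left (key.trans ?_) hK.le
      exact mul_le_mul_of_nonneg_left hlen (by positivity)
    rw [hB₃def]
    have e2 : K * (2 * Q * N₃ * τ) = K * (2 * Q * N₃) * τ := by ring
    linarith [e2 ▸ t2]
  -- sup-norm bounds from the pointwise ones
  have hS1 : supNorm1 T d τ (fun t => phi1 σ T d ξ₂ t - phi1 σ T d ξ₂' t) ≤ B₁ := by
    apply Real.sSup_le _ (by
      have := h1 (T - d) hTI
      exact le_trans (abs_nonneg _) this)
    rintro y ⟨t, ht, rfl⟩
    exact h1 t ht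
  have hS2 : supNorm2 T d τ (fun t s => phi2 b σ T d ξ₂ ξ₃ t s - phi2 b σ T d ξ₂' ξ₃' t s) ≤ B₂ := by
    apply Real.sSup_le _ (by
      have := h2 (T - d) hTI 0 h0J
      exact le_trans (abs_nonneg _) this)
    rintro y ⟨⟨t, s⟩, ⟨ht, hs⟩, rfl⟩
    exact h2 t ht s hs
  have hS3 : supNorm3 T d τ
      (fun t s r => phi3 b σ T d ξ₂ ξ₃ t s r - phi3 b σ T d ξ₂' ξ₃' t s r) ≤ B₃ := by
    apply Real.sSup_le _ (by
      have := h3 (T - d) hTI 0 h0J 0 h0J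
      exact le_trans (abs_nonneg _) this)
    rintro y ⟨⟨t, s, r⟩, ⟨ht, hs, hr⟩, rfl⟩
    exact h3 t ht s hs r hr
  -- combine
  have hsum : B₁ + B₂ + B₃ =
      K * τ * ((2 * P + |b| * 2 * P + |b| * |b| * 2 * P + Q + |b| * Q) * N₂ +
        (P + |b| * P + 2 * Q) * N₃) := by
    rw [hB₁def, hB₂def, hB₃def]; ring
  have hfinal : B₁ + B₂ + B₃ ≤
      τ * (K * (20 * (1 + |b|) ^ 3) + 1) * (N₁ + N₂ + N₃) := by
    rw [hsum]
    have hPa : P = |b| + |b| / 2 := hPdef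
    have hQa : Q = |b| ^ 2 + |b| ^ 2 / 2 := by rw [hQdef, sq_abs]
    have hc2' : 2 * P + |b| * 2 * P + |b| * |b| * 2 * P + Q + |b| * Q ≤ 20 * (1 + |b|) ^ 3 := by
      rw [hPa, hQa]; nlinarith [ha, sq_nonneg (1 + |b|), pow_nonneg ha 3]
    have hc3' : P + |b| * P + 2 * Q ≤ 20 * (1 + |b|) ^ 3 := by
      rw [hPa, hQa]; nlinarith [ha, sq_nonneg (1 + |b|), pow_nonneg ha 3]
    have step1 : (2 * P + |b| * 2 * P + |b| * |b| * 2 * P + Q + |b| * Q) * N₂ +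
        (P + |b| * P + 2 * Q) * N₃ ≤ 20 * (1 + |b|) ^ 3 * (N₂ + N₃) := by
      have := mul_le_mul_of_nonneg_right hc2' hN₂nn
      have := mul_le_mul_of_nonneg_right hc3' hN₃nn
      linarith
    calc K * τ * ((2 * P + |b| * 2 * P + |b| * |b| * 2 * P + Q + |b| * Q) * N₂ +
          (P + |b| * P + 2 * Q) * N₃)
        ≤ K * τ * (20 * (1 + |b|) ^ 3 * (N₂ + N₃)) :=
          mul_le_mul_of_nonneg_left step1 (by positivity)
      _ ≤ τ * (K * (20 * (1 + |b|) ^ 3) + 1) * (N₁ + N₂ + N₃) := by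
          have h20 : (0:ℝ) ≤ K * (20 * (1 + |b|) ^ 3) := by positivity
          nlinarith [mul_nonneg (mul_nonneg hτ.le h20) hN₁nn,
            mul_nonneg hτ.le hN₁nn, mul_nonneg hτ.le hN₂nn, mul_nonneg hτ.le hN₃nn]
  calc supNorm1 T d τ (fun t => phi1 σ T d ξ₂ t - phi1 σ T d ξ₂' t) +
        supNorm2 T d τ (fun t s => phi2 b σ T d ξ₂ ξ₃ t s - phi2 b σ T d ξ₂' ξ₃' t s) +
        supNorm3 T d τ (fun t s r => phi3 b σ T d ξ₂ ξ₃ t s r - phi3 b σ T d ξ₂' ξ₃' t s r)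
      ≤ B₁ + B₂ + B₃ := by linarith
    _ ≤ τ * (K * (20 * (1 + |b|) ^ 3) + 1) * (N₁ + N₂ + N₃) := hfinal
end

section
/- Fix reals b, σ with σ ≠ 0, d > 0, T ≥ 2d and τ ∈ (0, d]. Let ξ = (ξ₁, ξ₂, ξ₃) be any continuous solution of the first-slice integral system on D_τ. Then ξ is Lipschitz: there exists a constant L > 0 such that ξ₁ is L-Lipschitz on [T−d−τ, T−d], ξ₂ is L-Lipschitz in each of its two variables on [T−d−τ, T−d]×[−d,0], and ξ₃ is L-Lipschitz in each of its three variables on [T−d−τ, T−d]×[−d,0]². -/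
open Set MeasureTheory Filter

lemma minlip (p q p' q' : ℝ) : |min p q - min p' q'| ≤ max |p - p'| |q - q'| := by
  rw [abs_sub_le_iff]
  constructor
  · rcases le_total p' q' with h | h
    · calc min p q - min p' q' = min p q - p' := by rw [min_eq_left h]
        _ ≤ p - p' := by have := min_le_left p q; linarith
        _ ≤ |p - p'| := le_abs_self _
        _ ≤ _ := le_max_left _ _
    · calc min p q - min p' q' = min p q - q' := by rw [min_eq_right h]
        _ ≤ q - q' := by have := min_le_right p q; linarith
        _ ≤ |q - q'| := le_abs_self _
        _ ≤ _ := le_max_right _ _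
  · rcases le_total p q with h | h
    · calc min p' q' - min p q = min p' q' - p := by rw [min_eq_left h]
        _ ≤ p' - p := by have := min_le_left p' q'; linarith
        _ ≤ |p - p'| := by rw [abs_sub_comm]; exact le_abs_self _
        _ ≤ _ := le_max_left _ _
    · calc min p' q' - min p q = min p' q' - q := by rw [min_eq_right h]
        _ ≤ q' - q := by have := min_le_right p' q'; linarith
        _ ≤ |q - q'| := by rw [abs_sub_comm]; exact le_abs_self _
        _ ≤ _ := le_max_right _ _

lemma gronwall_aux {a b C β B : ℝ} (hab : a ≤ b) (hC : 0 ≤ C) (hβ : 0 ≤ β) (hB : 0 ≤ B)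
    {f : ℝ → ℝ} (hfB : ∀ x ∈ Icc a b, f x ≤ B)
    (hint : ∀ x ∈ Icc a b, IntervalIntegrable f volume x b)
    (hineq : ∀ x ∈ Icc a b, f x ≤ C + β * ∫ y in x..b, f y) :
    ∀ x ∈ Icc a b, f x ≤ C * Real.exp (β * (b - a)) := by
  have pow_int : ∀ (k : ℕ) (x : ℝ), (∫ y in x..b, (b - y) ^ k) = (b - x) ^ (k + 1) / (k + 1) := by
    intro k x
    rw [show (fun y => (b - y) ^ k) = fun y => (fun u => u ^ k) (b - y) from rfl,
      intervalIntegral.integral_comp_sub_left (fun u => u ^ k) b]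
    simp [integral_pow]
  have key : ∀ n : ℕ, ∀ x ∈ Icc a b,
      f x ≤ (∑ k ∈ Finset.range n, C * (β ^ k * (b - x) ^ k / (Nat.factorial k : ℝ)))
        + B * (β ^ n * (b - x) ^ n / (Nat.factorial n : ℝ)) := by
    intro n
    induction n with
    | zero => intro x hx; simpa using hfB x hx
    | succ n ih =>
      intro x hx
      have hxb : x ≤ b := hx.2
      have contTerm : ∀ (c : ℝ) (k : ℕ), Continuous fun y : ℝ =>
          c * (β ^ k * (b - y) ^ k / (Nat.factorial k : ℝ)) := by
        intro c k
        exact continuous_const.mul ((continuous_const.mul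
          (((continuous_const.sub continuous_id).pow k))).div_const _)
      have hRHScont : Continuous (fun y : ℝ =>
          (∑ k ∈ Finset.range n, C * (β ^ k * (b - y) ^ k / (Nat.factorial k : ℝ)))
            + B * (β ^ n * (b - y) ^ n / (Nat.factorial n : ℝ))) := by
        exact (continuous_finset_sum _ (fun k _ => contTerm C k)).add (contTerm B n)
      have hmono : (∫ y in x..b, f y) ≤ ∫ y in x..b,
          ((∑ k ∈ Finset.range n, C * (β ^ k * (b - y) ^ k / (Nat.factorial k : ℝ)))
            + B * (β ^ n * (b - y) ^ n / (Nat.factorial n : ℝ))) := by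
        apply intervalIntegral.integral_mono_on hxb (hint x hx) (hRHScont.intervalIntegrable x b)
        intro y hy
        exact ih y ⟨le_trans hx.1 hy.1, hy.2⟩
      have hcalc : (∫ y in x..b,
          ((∑ k ∈ Finset.range n, C * (β ^ k * (b - y) ^ k / (Nat.factorial k : ℝ)))
            + B * (β ^ n * (b - y) ^ n / (Nat.factorial n : ℝ))))
          = (∑ k ∈ Finset.range n, C * (β ^ k * ((b - x) ^ (k+1) / (k+1)) / (Nat.factorial k : ℝ)))
            + B * (β ^ n * ((b - x) ^ (n+1) / (n+1)) / (Nat.factorial n : ℝ)) := by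
        rw [intervalIntegral.integral_add, intervalIntegral.integral_finset_sum]
        · congr 1
          · apply Finset.sum_congr rfl
            intro k _
            rw [show (fun y => C * (β ^ k * (b - y) ^ k / (Nat.factorial k : ℝ)))
                = fun y => (C * β ^ k / (Nat.factorial k : ℝ)) * (b - y) ^ k by
                  funext y; ring]
            rw [intervalIntegral.integral_const_mul, pow_int]
            ring
          · rw [show (fun y => B * (β ^ n * (b - y) ^ n / (Nat.factorial n : ℝ)))
                = fun y => (B * β ^ n / (Nat.factorial n : ℝ)) * (b - y) ^ n by
                  funext y; ring]
            rw [intervalIntegral.integral_const_mul, pow_int]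
            ring
        · intro k _
          exact (contTerm C k).intervalIntegrable x b
        · exact (continuous_finset_sum _ (fun k _ => contTerm C k)).intervalIntegrable x b
        · exact (contTerm B n).intervalIntegrable x b
      have h1 := hineq x hx
      have h2 : f x ≤ C + β * ((∑ k ∈ Finset.range n, C * (β ^ k * ((b - x) ^ (k+1) / (k+1)) / (Nat.factorial k : ℝ)))
            + B * (β ^ n * ((b - x) ^ (n+1) / (n+1)) / (Nat.factorial n : ℝ))) := by
        calc f x ≤ C + β * ∫ y in x..b, f y := h1
          _ ≤ _ := by
            have := le_trans hmono (le_of_eq hcalc)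
            nlinarith [this, hβ]
      refine le_trans h2 (le_of_eq ?_)
      rw [Finset.sum_range_succ', mul_add, Finset.mul_sum]
      have hterm : ∀ k ∈ Finset.range n,
          β * (C * (β ^ k * ((b - x) ^ (k+1) / ((k:ℝ)+1)) / (Nat.factorial k : ℝ)))
            = C * (β ^ (k+1) * (b - x) ^ (k+1) / ((Nat.factorial (k+1) : ℕ) : ℝ)) := by
        intro k _
        have hfac : ((Nat.factorial (k+1) : ℕ) : ℝ) = ((k:ℝ)+1) * (Nat.factorial k : ℝ) := by
          rw [Nat.factorial_succ]; push_cast; ring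
        have hk : ((k : ℝ) + 1) ≠ 0 := by positivity
        have hfk : (Nat.factorial k : ℝ) ≠ 0 := by positivity
        rw [hfac]; field_simp; ring
      rw [Finset.sum_congr rfl hterm]
      have hXY : β * (B * (β ^ n * ((b - x) ^ (n+1) / ((n:ℝ)+1)) / (Nat.factorial n : ℝ)))
          = B * (β ^ (n+1) * (b - x) ^ (n+1) / ((Nat.factorial (n+1) : ℕ) : ℝ)) := by
        have hfac : ((Nat.factorial (n+1) : ℕ) : ℝ) = ((n:ℝ)+1) * (Nat.factorial n : ℝ) := by
          rw [Nat.factorial_succ]; push_cast; ring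
        have hk : ((n : ℝ) + 1) ≠ 0 := by positivity
        have hfk : (Nat.factorial n : ℝ) ≠ 0 := by positivity
        rw [hfac]; field_simp; ring
      have hC0 : C * (β ^ 0 * (b - x) ^ 0 / ((Nat.factorial 0 : ℕ) : ℝ)) = C := by simp
      linarith [hXY, hC0]
  -- now take the limit
  intro x hx
  have hsum : ∀ n : ℕ, f x ≤ C * Real.exp (β * (b - a)) + B * (β * (b - x)) ^ n / (Nat.factorial n : ℝ) := by
    intro n
    have h1 := key n x hx
    have h2 : (∑ k ∈ Finset.range n, C * (β ^ k * (b - x) ^ k / (Nat.factorial k : ℝ)))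
        ≤ C * Real.exp (β * (b - a)) := by
      have hbx : (0:ℝ) ≤ β * (b - x) := by
        have := hx.2; nlinarith
      calc (∑ k ∈ Finset.range n, C * (β ^ k * (b - x) ^ k / (Nat.factorial k : ℝ)))
          = C * ∑ k ∈ Finset.range n, (β * (b - x)) ^ k / (Nat.factorial k : ℝ) := by
            rw [Finset.mul_sum]; apply Finset.sum_congr rfl; intro k _; rw [mul_pow]
        _ ≤ C * Real.exp (β * (b - x)) := by
            apply mul_le_mul_of_nonneg_left (Real.sum_le_exp_of_nonneg hbx n) hC
        _ ≤ C * Real.exp (β * (b - a)) := by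
            apply mul_le_mul_of_nonneg_left _ hC
            apply Real.exp_le_exp.mpr
            have := hx.1; nlinarith
    calc f x ≤ _ := h1
      _ ≤ C * Real.exp (β * (b - a)) + B * (β ^ n * (b - x) ^ n / (Nat.factorial n : ℝ)) := by
          linarith
      _ = C * Real.exp (β * (b - a)) + B * (β * (b - x)) ^ n / (Nat.factorial n : ℝ) := by
          rw [mul_pow]; ring
  have htend : Tendsto (fun n : ℕ => C * Real.exp (β * (b - a)) + B * (β * (b - x)) ^ n / (Nat.factorial n : ℝ))
      atTop (nhds (C * Real.exp (β * (b - a)))) := by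
    have h0 : Tendsto (fun n : ℕ => (β * (b - x)) ^ n / (Nat.factorial n : ℝ)) atTop (nhds 0) :=
      FloorSemiring.tendsto_pow_div_factorial_atTop (β * (b - x))
    have := (h0.const_mul B).const_add (C * Real.exp (β * (b - a)))
    simpa [mul_div_assoc] using this
  exact ge_of_tendsto' htend hsum

lemma int_diff {G G' ψ : ℝ → ℝ} {c ℓ ℓ' Mb : ℝ} (hc0 : 0 ≤ c) (hcℓ : c ≤ ℓ) (hcℓ' : c ≤ ℓ')
    (hG : ContinuousOn G (Icc 0 ℓ)) (hG' : ContinuousOn G' (Icc 0 ℓ'))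
    (hGb : ∀ y ∈ Icc c ℓ, |G y| ≤ Mb) (hG'b : ∀ y ∈ Icc c ℓ', |G' y| ≤ Mb)
    (hψ : IntervalIntegrable ψ volume 0 c) (hψb : ∀ y ∈ Icc 0 c, |G y - G' y| ≤ ψ y) :
    |(∫ y in (0:ℝ)..ℓ, G y) - ∫ y in (0:ℝ)..ℓ', G' y|
      ≤ Mb * (ℓ - c) + Mb * (ℓ' - c) + ∫ y in (0:ℝ)..c, ψ y := by
  have hG1 : IntervalIntegrable G volume 0 c :=
    ContinuousOn.intervalIntegrable (by rw [uIcc_of_le hc0]; exact hG.mono (Icc_subset_Icc le_rfl hcℓ))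
  have hG2 : IntervalIntegrable G volume c ℓ :=
    ContinuousOn.intervalIntegrable (by rw [uIcc_of_le hcℓ]; exact hG.mono (Icc_subset_Icc hc0 le_rfl))
  have hG'1 : IntervalIntegrable G' volume 0 c :=
    ContinuousOn.intervalIntegrable (by rw [uIcc_of_le hc0]; exact hG'.mono (Icc_subset_Icc le_rfl hcℓ'))
  have hG'2 : IntervalIntegrable G' volume c ℓ' :=
    ContinuousOn.intervalIntegrable (by rw [uIcc_of_le hcℓ']; exact hG'.mono (Icc_subset_Icc hc0 le_rfl))
  rw [← intervalIntegral.integral_add_adjacent_intervals hG1 hG2,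
    ← intervalIntegral.integral_add_adjacent_intervals hG'1 hG'2]
  have e1 : |∫ y in c..ℓ, G y| ≤ Mb * (ℓ - c) := by
    have := intervalIntegral.norm_integral_le_of_norm_le_const
      (C := Mb) (f := G) (a := c) (b := ℓ) ?_
    · have h2 : |ℓ - c| = ℓ - c := abs_of_nonneg (by linarith)
      rw [Real.norm_eq_abs, h2] at this
      exact this
    · intro y hy
      rw [uIoc_of_le hcℓ] at hy
      rw [Real.norm_eq_abs]
      exact hGb y ⟨le_of_lt hy.1, hy.2⟩
  have e2 : |∫ y in c..ℓ', G' y| ≤ Mb * (ℓ' - c) := by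
    have := intervalIntegral.norm_integral_le_of_norm_le_const
      (C := Mb) (f := G') (a := c) (b := ℓ') ?_
    · have h2 : |ℓ' - c| = ℓ' - c := abs_of_nonneg (by linarith)
      rw [Real.norm_eq_abs, h2] at this
      exact this
    · intro y hy
      rw [uIoc_of_le hcℓ'] at hy
      rw [Real.norm_eq_abs]
      exact hG'b y ⟨le_of_lt hy.1, hy.2⟩
  have e3 : |(∫ y in (0:ℝ)..c, G y) - ∫ y in (0:ℝ)..c, G' y| ≤ ∫ y in (0:ℝ)..c, ψ y := by
    rw [← intervalIntegral.integral_sub hG1 hG'1]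
    have h1 : |∫ y in (0:ℝ)..c, (G y - G' y)| ≤ ∫ y in (0:ℝ)..c, |G y - G' y| := by
      have := intervalIntegral.norm_integral_le_integral_norm (f := fun y => G y - G' y)
        (a := 0) (b := c) (μ := volume) hc0
      simpa [Real.norm_eq_abs] using this
    refine le_trans h1 (intervalIntegral.integral_mono_on hc0 ?_ hψ hψb)
    exact (hG1.sub hG'1).abs
  calc |((∫ y in (0:ℝ)..c, G y) + ∫ y in c..ℓ, G y) - ((∫ y in (0:ℝ)..c, G' y) + ∫ y in c..ℓ', G' y)|
      ≤ |(∫ y in (0:ℝ)..c, G y) - ∫ y in (0:ℝ)..c, G' y| + |∫ y in c..ℓ, G y| + |∫ y in c..ℓ', G' y| := by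
        have := abs_sub (∫ y in c..ℓ, G y) (∫ y in c..ℓ', G' y)
        calc |((∫ y in (0:ℝ)..c, G y) + ∫ y in c..ℓ, G y) - ((∫ y in (0:ℝ)..c, G' y) + ∫ y in c..ℓ', G' y)|
            = |((∫ y in (0:ℝ)..c, G y) - ∫ y in (0:ℝ)..c, G' y) + ((∫ y in c..ℓ, G y) - ∫ y in c..ℓ', G' y)| := by ring_nf
          _ ≤ |(∫ y in (0:ℝ)..c, G y) - ∫ y in (0:ℝ)..c, G' y| + |(∫ y in c..ℓ, G y) - ∫ y in c..ℓ', G' y| := abs_add_le _ _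
          _ ≤ _ := by
              have h := abs_sub (∫ y in c..ℓ, G y) (∫ y in c..ℓ', G' y)
              linarith [abs_sub_abs_le_abs_sub (∫ y in c..ℓ, G y) (∫ y in c..ℓ', G' y),
                abs_sub (∫ y in c..ℓ, G y) (∫ y in c..ℓ', G' y)]
    _ ≤ _ := by linarith

def pairs (ξ₂ : ℝ → ℝ → ℝ) (ξ₃ : ℝ → ℝ → ℝ → ℝ) (I J : Set ℝ) (δ x : ℝ) : Set ℝ :=
  {v | ∃ t t' s s' r r', t ∈ I ∧ t' ∈ I ∧ s ∈ J ∧ s' ∈ J ∧ r ∈ J ∧ r' ∈ J ∧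
    x ≤ t ∧ x ≤ t' ∧ |t - t'| ≤ δ ∧ |s - s'| ≤ δ ∧ |r - r'| ≤ δ ∧
    (v = |ξ₂ t s - ξ₂ t' s'| ∨ v = |ξ₃ t s r - ξ₃ t' s' r'|)}

noncomputable def gf (ξ₂ : ℝ → ℝ → ℝ) (ξ₃ : ℝ → ℝ → ℝ → ℝ) (I J : Set ℝ) (δ x : ℝ) : ℝ :=
  sSup (pairs ξ₂ ξ₃ I J δ x)

/-- The first-slice integral system on `D_τ = [T-d-τ, T-d] × [-d,0]²`. -/
def isSolutionOn (b σ T d τ : ℝ) (ξ₁ : ℝ → ℝ) (ξ₂ : ℝ → ℝ → ℝ) (ξ₃ : ℝ → ℝ → ℝ → ℝ) : Prop :=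
  ∀ t ∈ Icc (T - d - τ) (T - d), ∀ s ∈ Icc (-d) 0, ∀ r ∈ Icc (-d) 0,
    ξ₁ t = 1 - (σ ^ 2)⁻¹ * ∫ x in t..(T - d), (ξ₂ x 0) ^ 2 ∧
    ξ₂ t s = b * ξ₁ (min (T - d) (t + s + d)) -
      (σ ^ 2)⁻¹ * ∫ x in t..(min (T - d) (t + s + d)), ξ₂ x 0 * ξ₃ x (t + s - x) 0 ∧
    ξ₃ t s r = b * ξ₂ (min (T - d) (t + min s r + d)) (|s - r| - d) -
      (σ ^ 2)⁻¹ * ∫ x in t..(min (T - d) (t + min s r + d)),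
        ξ₃ x (t + s - x) 0 * ξ₃ x 0 (t + r - x)

set_option maxHeartbeats 4000000 in
/-- Any continuous solution of the first-slice integral system on `D_τ`
is Lipschitz in each variable, with a common Lipschitz constant `L > 0`. -/
theorem stmt_5 (b σ d T τ : ℝ) (hσ : σ ≠ 0) (hd : 0 < d) (hT : 2 * d ≤ T)
    (hτ0 : 0 < τ) (hτ : τ ≤ d)
    (ξ₁ : ℝ → ℝ) (ξ₂ : ℝ → ℝ → ℝ) (ξ₃ : ℝ → ℝ → ℝ → ℝ)
    (hc1 : ContinuousOn ξ₁ (Icc (T - d - τ) (T - d)))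
    (hc2 : ContinuousOn (fun p : ℝ × ℝ => ξ₂ p.1 p.2)
      (Icc (T - d - τ) (T - d) ×ˢ Icc (-d) 0))
    (hc3 : ContinuousOn (fun p : ℝ × ℝ × ℝ => ξ₃ p.1 p.2.1 p.2.2)
      (Icc (T - d - τ) (T - d) ×ˢ Icc (-d) 0 ×ˢ Icc (-d) 0))
    (hsol : isSolutionOn b σ T d τ ξ₁ ξ₂ ξ₃) :
    ∃ L : ℝ, 0 < L ∧
      (∀ t ∈ Icc (T - d - τ) (T - d), ∀ t' ∈ Icc (T - d - τ) (T - d),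
        |ξ₁ t - ξ₁ t'| ≤ L * |t - t'|) ∧
      (∀ s ∈ Icc (-d) 0, ∀ t ∈ Icc (T - d - τ) (T - d), ∀ t' ∈ Icc (T - d - τ) (T - d),
        |ξ₂ t s - ξ₂ t' s| ≤ L * |t - t'|) ∧
      (∀ t ∈ Icc (T - d - τ) (T - d), ∀ s ∈ Icc (-d) 0, ∀ s' ∈ Icc (-d) 0,
        |ξ₂ t s - ξ₂ t s'| ≤ L * |s - s'|) ∧
      (∀ s ∈ Icc (-d) 0, ∀ r ∈ Icc (-d) 0,
        ∀ t ∈ Icc (T - d - τ) (T - d), ∀ t' ∈ Icc (T - d - τ) (T - d),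
        |ξ₃ t s r - ξ₃ t' s r| ≤ L * |t - t'|) ∧
      (∀ t ∈ Icc (T - d - τ) (T - d), ∀ r ∈ Icc (-d) 0,
        ∀ s ∈ Icc (-d) 0, ∀ s' ∈ Icc (-d) 0,
        |ξ₃ t s r - ξ₃ t s' r| ≤ L * |s - s'|) ∧
      (∀ t ∈ Icc (T - d - τ) (T - d), ∀ s ∈ Icc (-d) 0,
        ∀ r ∈ Icc (-d) 0, ∀ r' ∈ Icc (-d) 0,
        |ξ₃ t s r - ξ₃ t s r'| ≤ L * |r - r'|) := by
  have hK : (0:ℝ) < (σ ^ 2)⁻¹ := by positivity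
  set K : ℝ := (σ ^ 2)⁻¹ with hKdef
  set Td : ℝ := T - d with hTddef
  set A : ℝ := Td - τ with hAdef
  set I : Set ℝ := Icc A Td with hIdef
  set J : Set ℝ := Icc (-d) 0 with hJdef
  have hAT : A ≤ Td := by simp [hAdef]; linarith
  have h0J : (0:ℝ) ∈ J := by simp [hJdef]; linarith
  have hTdI : Td ∈ I := by simp [hIdef]; linarith
  have hdJ : (-d) ∈ J := by simp [hJdef]; linarith
  -- bound M
  obtain ⟨M, hM1, hM2, hM3, hM⟩ :
      ∃ M : ℝ, (∀ t ∈ I, |ξ₁ t| ≤ M) ∧ (∀ t ∈ I, ∀ s ∈ J, |ξ₂ t s| ≤ M) ∧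
        (∀ t ∈ I, ∀ s ∈ J, ∀ r ∈ J, |ξ₃ t s r| ≤ M) ∧ 1 ≤ M := by
    obtain ⟨M₁, hM₁⟩ := (isCompact_Icc (a := A) (b := Td)).exists_bound_of_continuousOn hc1
    obtain ⟨M₂, hM₂⟩ := ((isCompact_Icc (a := A) (b := Td)).prod
      (isCompact_Icc (a := -d) (b := 0))).exists_bound_of_continuousOn hc2
    obtain ⟨M₃, hM₃⟩ := ((isCompact_Icc (a := A) (b := Td)).prod
      ((isCompact_Icc (a := -d) (b := 0)).prod
        (isCompact_Icc (a := -d) (b := 0)))).exists_bound_of_continuousOn hc3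
    refine ⟨max 1 (max M₁ (max M₂ M₃)), ?_, ?_, ?_, le_max_left _ _⟩
    · intro t ht
      have h := hM₁ t ht
      rw [Real.norm_eq_abs] at h
      exact le_trans h (le_trans (le_max_left _ _) (le_max_right _ _))
    · intro t ht s hs
      have h := hM₂ (t, s) ⟨ht, hs⟩
      rw [Real.norm_eq_abs] at h
      exact le_trans h (le_trans (le_max_left _ _)
        (le_trans (le_max_right _ _) (le_max_right _ _)))
    · intro t ht s hs r hr
      have h := hM₃ (t, s, r) ⟨ht, hs, hr⟩
      rw [Real.norm_eq_abs] at h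
      exact le_trans h (le_trans (le_max_right _ _)
        (le_trans (le_max_right _ _) (le_max_right _ _)))
  have hM0 : (0:ℝ) ≤ M := le_trans zero_le_one hM
  -- equations
  have eq₁ : ∀ t ∈ I, ξ₁ t = 1 - K * ∫ x in t..Td, (ξ₂ x 0) ^ 2 := by
    intro t ht; exact (hsol t ht 0 h0J 0 h0J).1
  have minoff : ∀ t w : ℝ, min Td (t + w + d) = t + min (Td - t) (w + d) := by
    intro t w
    rcases le_total Td (t + w + d) with h | h
    · rw [min_eq_left h, min_eq_left (by linarith)]; ring
    · rw [min_eq_right h, min_eq_right (by linarith)]; ring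
  have cov : ∀ (F : ℝ → ℝ) (t ℓ : ℝ), (∫ x in t..(t + ℓ), F x) = ∫ y in (0:ℝ)..ℓ, F (t + y) := by
    intro F t ℓ
    have := intervalIntegral.integral_comp_add_left (a := (0:ℝ)) (b := ℓ) F t
    rw [add_zero] at this; exact this.symm
  have eq₂ : ∀ t ∈ I, ∀ s ∈ J, ξ₂ t s = b * ξ₁ (min Td (t + s + d)) -
      K * ∫ y in (0:ℝ)..(min (Td - t) (s + d)), ξ₂ (t + y) 0 * ξ₃ (t + y) (s - y) 0 := by
    intro t ht s hs
    have h := (hsol t ht s hs s hs).2.1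
    rw [h]
    congr 1
    rw [minoff t s, cov (fun x => ξ₂ x 0 * ξ₃ x (t + s - x) 0) t (min (Td - t) (s + d))]
    congr 1
    apply intervalIntegral.integral_congr
    intro y _
    show ξ₂ (t + y) 0 * ξ₃ (t + y) (t + s - (t + y)) 0 = _
    rw [show t + s - (t + y) = s - y by ring]
  have eq₃ : ∀ t ∈ I, ∀ s ∈ J, ∀ r ∈ J, ξ₃ t s r =
      b * ξ₂ (min Td (t + min s r + d)) (|s - r| - d) -
      K * ∫ y in (0:ℝ)..(min (Td - t) (min s r + d)), ξ₃ (t + y) (s - y) 0 * ξ₃ (t + y) 0 (r - y) := by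
    intro t ht s hs r hr
    have h := (hsol t ht s hs r hr).2.2
    rw [h]
    congr 1
    rw [minoff t (min s r),
      cov (fun x => ξ₃ x (t + s - x) 0 * ξ₃ x 0 (t + r - x)) t (min (Td - t) (min s r + d))]
    congr 1
    apply intervalIntegral.integral_congr
    intro y _
    show ξ₃ (t + y) (t + s - (t + y)) 0 * ξ₃ (t + y) 0 (t + r - (t + y)) = _
    rw [show t + s - (t + y) = s - y by ring, show t + r - (t + y) = r - y by ring]
  -- domain helper
  have domty : ∀ t ∈ I, ∀ w s : ℝ, s ∈ J → w ≤ s → -d ≤ w →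
      ∀ y, 0 ≤ y → y ≤ min (Td - t) (w + d) → (t + y ∈ I ∧ s - y ∈ J) := by
    intro t ht w s hs hws hw y hy0 hyl
    have h1 := le_trans hyl (min_le_left _ _)
    have h2 := le_trans hyl (min_le_right _ _)
    rw [hIdef, mem_Icc] at ht ⊢
    rw [hJdef, mem_Icc] at hs ⊢
    constructor
    · constructor <;> linarith [ht.1, ht.2]
    · constructor <;> linarith [hs.1, hs.2]
  -- continuity helpers
  have c2s : ContinuousOn (fun x => ξ₂ x 0) I := by
    have : (fun x => ξ₂ x 0) = (fun p : ℝ × ℝ => ξ₂ p.1 p.2) ∘ (fun x => (x, (0:ℝ))) := rfl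
    rw [this]
    exact hc2.comp (Continuous.continuousOn (by fun_prop)) (fun x hx => ⟨hx, h0J⟩)
  have c2a : ∀ (t ℓ : ℝ), (∀ y ∈ Icc (0:ℝ) ℓ, t + y ∈ I) →
      ContinuousOn (fun y => ξ₂ (t + y) 0) (Icc 0 ℓ) := by
    intro t ℓ h1
    have : (fun y => ξ₂ (t + y) 0) = (fun p : ℝ × ℝ => ξ₂ p.1 p.2) ∘ (fun y => (t + y, (0:ℝ))) := rfl
    rw [this]
    exact hc2.comp (Continuous.continuousOn (by fun_prop)) (fun y hy => ⟨h1 y hy, h0J⟩)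
  have c3a : ∀ (t s ℓ : ℝ), (∀ y ∈ Icc (0:ℝ) ℓ, t + y ∈ I) → (∀ y ∈ Icc (0:ℝ) ℓ, s - y ∈ J) →
      ContinuousOn (fun y => ξ₃ (t + y) (s - y) 0) (Icc 0 ℓ) := by
    intro t s ℓ h1 h2
    have : (fun y => ξ₃ (t + y) (s - y) 0)
        = (fun p : ℝ × ℝ × ℝ => ξ₃ p.1 p.2.1 p.2.2) ∘ (fun y => (t + y, (s - y, (0:ℝ)))) := rfl
    rw [this]
    refine hc3.comp (Continuous.continuousOn (by fun_prop)) (fun y hy => ?_)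
    exact ⟨h1 y hy, h2 y hy, h0J⟩
  have c3b : ∀ (t r ℓ : ℝ), (∀ y ∈ Icc (0:ℝ) ℓ, t + y ∈ I) → (∀ y ∈ Icc (0:ℝ) ℓ, r - y ∈ J) →
      ContinuousOn (fun y => ξ₃ (t + y) 0 (r - y)) (Icc 0 ℓ) := by
    intro t r ℓ h1 h2
    have : (fun y => ξ₃ (t + y) 0 (r - y))
        = (fun p : ℝ × ℝ × ℝ => ξ₃ p.1 p.2.1 p.2.2) ∘ (fun y => (t + y, ((0:ℝ), r - y))) := rfl
    rw [this]
    refine hc3.comp (Continuous.continuousOn (by fun_prop)) (fun y hy => ?_)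
    exact ⟨h1 y hy, h0J, h2 y hy⟩
  -- gf facts
  have hbdd : ∀ δ x : ℝ, BddAbove (pairs ξ₂ ξ₃ I J δ x) := by
    intro δ x
    refine ⟨2 * M, fun v hv => ?_⟩
    obtain ⟨t, t', s, s', r, r', ht, ht', hs, hs', hr, hr', -, -, -, -, -, hv⟩ := hv
    rcases hv with h | h <;> subst h
    · calc |ξ₂ t s - ξ₂ t' s'| ≤ |ξ₂ t s| + |ξ₂ t' s'| := abs_sub _ _
        _ ≤ M + M := add_le_add (hM2 t ht s hs) (hM2 t' ht' s' hs')
        _ = 2 * M := by ring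
    · calc |ξ₃ t s r - ξ₃ t' s' r'| ≤ |ξ₃ t s r| + |ξ₃ t' s' r'| := abs_sub _ _
        _ ≤ M + M := add_le_add (hM3 t ht s hs r hr) (hM3 t' ht' s' hs' r' hr')
        _ = 2 * M := by ring
  have gmem₂ : ∀ (δ x t t' s s' : ℝ), t ∈ I → t' ∈ I → s ∈ J → s' ∈ J →
      x ≤ t → x ≤ t' → |t - t'| ≤ δ → |s - s'| ≤ δ → 0 ≤ δ →
      |ξ₂ t s - ξ₂ t' s'| ≤ gf ξ₂ ξ₃ I J δ x := by
    intro δ x t t' s s' ht ht' hs hs' hxt hxt' h1 h2 hδ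
    exact le_csSup (hbdd δ x) ⟨t, t', s, s', 0, 0, ht, ht', hs, hs', h0J, h0J,
      hxt, hxt', h1, h2, by simpa using hδ, Or.inl rfl⟩
  have gmem₃ : ∀ (δ x t t' s s' r r' : ℝ), t ∈ I → t' ∈ I → s ∈ J → s' ∈ J → r ∈ J → r' ∈ J →
      x ≤ t → x ≤ t' → |t - t'| ≤ δ → |s - s'| ≤ δ → |r - r'| ≤ δ →
      |ξ₃ t s r - ξ₃ t' s' r'| ≤ gf ξ₂ ξ₃ I J δ x := by
    intro δ x t t' s s' r r' ht ht' hs hs' hr hr' hxt hxt' h1 h2 h3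
    exact le_csSup (hbdd δ x) ⟨t, t', s, s', r, r', ht, ht', hs, hs', hr, hr',
      hxt, hxt', h1, h2, h3, Or.inr rfl⟩
  have gnonneg : ∀ δ x : ℝ, 0 ≤ δ → x ≤ Td → 0 ≤ gf ξ₂ ξ₃ I J δ x := by
    intro δ x hδ hx
    have h0 : |ξ₂ Td 0 - ξ₂ Td 0| ∈ pairs ξ₂ ξ₃ I J δ x :=
      ⟨Td, Td, 0, 0, 0, 0, hTdI, hTdI, h0J, h0J, h0J, h0J, hx, hx,
        by simpa using hδ, by simpa using hδ, by simpa using hδ, Or.inl rfl⟩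
    have := le_csSup (hbdd δ x) h0
    simpa [gf] using this
  have gub : ∀ δ x : ℝ, gf ξ₂ ξ₃ I J δ x ≤ 2 * M := by
    intro δ x
    apply Real.sSup_le _ (by linarith)
    rintro v ⟨t, t', s, s', r, r', ht, ht', hs, hs', hr, hr', -, -, -, -, -, hv⟩
    rcases hv with h | h <;> subst h
    · calc |ξ₂ t s - ξ₂ t' s'| ≤ |ξ₂ t s| + |ξ₂ t' s'| := abs_sub _ _
        _ ≤ M + M := add_le_add (hM2 t ht s hs) (hM2 t' ht' s' hs')
        _ = 2 * M := by ring
    · calc |ξ₃ t s r - ξ₃ t' s' r'| ≤ |ξ₃ t s r| + |ξ₃ t' s' r'| := abs_sub _ _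
        _ ≤ M + M := add_le_add (hM3 t ht s hs r hr) (hM3 t' ht' s' hs' r' hr')
        _ = 2 * M := by ring
  have ganti : ∀ δ : ℝ, 0 ≤ δ → AntitoneOn (gf ξ₂ ξ₃ I J δ) (Icc A Td) := by
    intro δ hδ x hx x' hx' hxx'
    apply csSup_le_csSup (hbdd δ x)
    · exact ⟨|ξ₂ Td 0 - ξ₂ Td 0|, Td, Td, 0, 0, 0, 0, hTdI, hTdI, h0J, h0J, h0J, h0J,
        hx'.2, hx'.2, by simpa using hδ, by simpa using hδ, by simpa using hδ, Or.inl rfl⟩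
    · rintro v ⟨t, t', s, s', r, r', ht, ht', hs, hs', hr, hr', hxt, hxt', h1, h2, h3, hv⟩
      exact ⟨t, t', s, s', r, r', ht, ht', hs, hs', hr, hr',
        le_trans hxx' hxt, le_trans hxx' hxt', h1, h2, h3, hv⟩
  have gint : ∀ δ : ℝ, 0 ≤ δ → ∀ x ∈ I, IntervalIntegrable (gf ξ₂ ξ₃ I J δ) volume x Td := by
    intro δ hδ x hx
    apply AntitoneOn.intervalIntegrable
    rw [uIcc_of_le hx.2]
    exact (ganti δ hδ).mono (Icc_subset_Icc hx.1 le_rfl)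
  have gIG : ∀ δ : ℝ, 0 ≤ δ → ∀ x ∈ I, 0 ≤ ∫ y in x..Td, gf ξ₂ ξ₃ I J δ y := by
    intro δ hδ x hx
    exact intervalIntegral.integral_nonneg hx.2 (fun y hy => gnonneg δ y hδ hy.2)
  -- Lipschitz of ξ₁
  have lip₁ : ∀ u ∈ I, ∀ u' ∈ I, |ξ₁ u - ξ₁ u'| ≤ (K * M ^ 2) * |u - u'| := by
    intro u hu u' hu'
    have csq : ContinuousOn (fun x => (ξ₂ x 0) ^ 2) I := c2s.pow 2
    have i1 : IntervalIntegrable (fun x => (ξ₂ x 0) ^ 2) volume u' u :=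
      (csq.mono (uIcc_subset_Icc hu' hu)).intervalIntegrable
    have i2 : IntervalIntegrable (fun x => (ξ₂ x 0) ^ 2) volume u Td :=
      (csq.mono (uIcc_subset_Icc hu hTdI)).intervalIntegrable
    have hadj := intervalIntegral.integral_add_adjacent_intervals i1 i2
    rw [eq₁ u hu, eq₁ u' hu']
    rw [show (1 - K * ∫ x in u..Td, (ξ₂ x 0) ^ 2) - (1 - K * ∫ x in u'..Td, (ξ₂ x 0) ^ 2)
      = K * ((∫ x in u'..Td, (ξ₂ x 0) ^ 2) - ∫ x in u..Td, (ξ₂ x 0) ^ 2) by ring]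
    rw [← hadj, add_sub_cancel_right, abs_mul, abs_of_pos hK]
    have hb := intervalIntegral.norm_integral_le_of_norm_le_const
      (C := M ^ 2) (f := fun x => (ξ₂ x 0) ^ 2) (a := u') (b := u) ?_
    · rw [Real.norm_eq_abs] at hb
      calc K * |∫ x in u'..u, (ξ₂ x 0) ^ 2| ≤ K * (M ^ 2 * |u - u'|) := by
            exact mul_le_mul_of_nonneg_left hb (le_of_lt hK)
        _ = K * M ^ 2 * |u - u'| := by ring
    · intro y hy
      have hyI : y ∈ I := uIcc_subset_Icc hu' hu (uIoc_subset_uIcc hy)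
      show ‖ξ₂ y 0 ^ 2‖ ≤ M ^ 2
      rw [Real.norm_eq_abs, abs_of_nonneg (sq_nonneg _), ← sq_abs (ξ₂ y 0)]
      exact pow_le_pow_left₀ (abs_nonneg _) (hM2 y hyI 0 h0J) 2
  -- key lemmas
  have lemA : ∀ δ : ℝ, 0 ≤ δ → ∀ x ∈ I, ∀ t ∈ I, ∀ t' ∈ I, ∀ s ∈ J, ∀ s' ∈ J,
      x ≤ t → x ≤ t' → |t - t'| ≤ δ → |s - s'| ≤ δ →
      |ξ₂ t s - ξ₂ t' s'| ≤ (K * M ^ 2 * (2 * |b|) + K * M ^ 2) * δ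
        + (2 * K * M) * ∫ y in x..Td, gf ξ₂ ξ₃ I J δ y := by
    intro δ hδ x hx t ht t' ht' s hs s' hs' hxt hxt' hts hss
    have key : ξ₂ t s - ξ₂ t' s' = b * (ξ₁ (min Td (t + s + d)) - ξ₁ (min Td (t' + s' + d)))
        - K * ((∫ y in (0:ℝ)..(min (Td - t) (s + d)), ξ₂ (t + y) 0 * ξ₃ (t + y) (s - y) 0)
          - ∫ y in (0:ℝ)..(min (Td - t') (s' + d)), ξ₂ (t' + y) 0 * ξ₃ (t' + y) (s' - y) 0) := by
      rw [eq₂ t ht s hs, eq₂ t' ht' s' hs']; ring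
    set ℓ : ℝ := min (Td - t) (s + d) with hldef
    set ℓ' : ℝ := min (Td - t') (s' + d) with hl'def
    set c : ℝ := min ℓ ℓ' with hcdef
    have hl0 : 0 ≤ ℓ := le_min (by linarith [ht.2]) (by linarith [hs.1])
    have hl'0 : 0 ≤ ℓ' := le_min (by linarith [ht'.2]) (by linarith [hs'.1])
    have hc0 : 0 ≤ c := le_min hl0 hl'0
    have hcl : c ≤ ℓ := min_le_left _ _
    have hcl' : c ≤ ℓ' := min_le_right _ _
    have hlt : ℓ ≤ Td - t := min_le_left _ _
    have hll' : |ℓ - ℓ'| ≤ δ := by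
      refine le_trans (minlip _ _ _ _) (max_le ?_ ?_)
      · rw [show Td - t - (Td - t') = -(t - t') by ring, abs_neg]; exact hts
      · rw [show s + d - (s' + d) = s - s' by ring]; exact hss
    have hsum : (ℓ - c) + (ℓ' - c) ≤ δ := by
      rcases le_total ℓ ℓ' with h | h
      · rw [hcdef, min_eq_left h]
        have h2 := abs_le.mp hll'
        linarith [h2.1]
      · rw [hcdef, min_eq_right h]
        have h2 := abs_le.mp hll'
        linarith [h2.2]
    have hmI : min Td (t + s + d) ∈ I := by
      rw [hIdef, mem_Icc]
      exact ⟨le_min hAT (by linarith [ht.1, hs.1]), min_le_left _ _⟩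
    have hm'I : min Td (t' + s' + d) ∈ I := by
      rw [hIdef, mem_Icc]
      exact ⟨le_min hAT (by linarith [ht'.1, hs'.1]), min_le_left _ _⟩
    have hmm' : |min Td (t + s + d) - min Td (t' + s' + d)| ≤ 2 * δ := by
      refine le_trans (minlip _ _ _ _) (max_le ?_ ?_)
      · rw [sub_self, abs_zero]; positivity
      · rw [show t + s + d - (t' + s' + d) = (t - t') + (s - s') by ring]
        exact le_trans (abs_add_le _ _) (by linarith)
    have hdomt : ∀ y ∈ Icc (0:ℝ) ℓ, t + y ∈ I ∧ s - y ∈ J :=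
      fun y hy => domty t ht s s hs le_rfl hs.1 y hy.1 hy.2
    have hdomt' : ∀ y ∈ Icc (0:ℝ) ℓ', t' + y ∈ I ∧ s' - y ∈ J :=
      fun y hy => domty t' ht' s' s' hs' le_rfl hs'.1 y hy.1 hy.2
    have hG : ContinuousOn (fun y => ξ₂ (t + y) 0 * ξ₃ (t + y) (s - y) 0) (Icc 0 ℓ) :=
      (c2a t ℓ (fun y hy => (hdomt y hy).1)).mul
        (c3a t s ℓ (fun y hy => (hdomt y hy).1) (fun y hy => (hdomt y hy).2))
    have hG' : ContinuousOn (fun y => ξ₂ (t' + y) 0 * ξ₃ (t' + y) (s' - y) 0) (Icc 0 ℓ') :=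
      (c2a t' ℓ' (fun y hy => (hdomt' y hy).1)).mul
        (c3a t' s' ℓ' (fun y hy => (hdomt' y hy).1) (fun y hy => (hdomt' y hy).2))
    have hGb : ∀ y ∈ Icc c ℓ, |ξ₂ (t + y) 0 * ξ₃ (t + y) (s - y) 0| ≤ M * M := by
      intro y hy
      obtain ⟨h1, h2⟩ := hdomt y ⟨le_trans hc0 hy.1, hy.2⟩
      rw [abs_mul]
      exact mul_le_mul (hM2 _ h1 0 h0J) (hM3 _ h1 _ h2 0 h0J) (abs_nonneg _) hM0
    have hG'b : ∀ y ∈ Icc c ℓ', |ξ₂ (t' + y) 0 * ξ₃ (t' + y) (s' - y) 0| ≤ M * M := by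
      intro y hy
      obtain ⟨h1, h2⟩ := hdomt' y ⟨le_trans hc0 hy.1, hy.2⟩
      rw [abs_mul]
      exact mul_le_mul (hM2 _ h1 0 h0J) (hM3 _ h1 _ h2 0 h0J) (abs_nonneg _) hM0
    have hψint : IntervalIntegrable (fun y => 2 * M * gf ξ₂ ξ₃ I J δ (x + y)) volume 0 c := by
      apply IntervalIntegrable.const_mul
      apply AntitoneOn.intervalIntegrable
      rw [uIcc_of_le hc0]
      intro y1 h1 y2 h2 h12
      exact ganti δ hδ ⟨by linarith [h1.1, hx.1], by linarith [h1.2, hcl]⟩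
        ⟨by linarith [h2.1, hx.1], by linarith [h2.2, hcl]⟩ (by linarith)
    have hψb : ∀ y ∈ Icc (0:ℝ) c,
        |ξ₂ (t + y) 0 * ξ₃ (t + y) (s - y) 0 - ξ₂ (t' + y) 0 * ξ₃ (t' + y) (s' - y) 0|
          ≤ 2 * M * gf ξ₂ ξ₃ I J δ (x + y) := by
      intro y hy
      obtain ⟨ht1, hs1⟩ := hdomt y ⟨hy.1, le_trans hy.2 hcl⟩
      obtain ⟨ht2, hs2⟩ := hdomt' y ⟨hy.1, le_trans hy.2 hcl'⟩
      have e : ξ₂ (t + y) 0 * ξ₃ (t + y) (s - y) 0 - ξ₂ (t' + y) 0 * ξ₃ (t' + y) (s' - y) 0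
          = ξ₂ (t + y) 0 * (ξ₃ (t + y) (s - y) 0 - ξ₃ (t' + y) (s' - y) 0)
            + ξ₃ (t' + y) (s' - y) 0 * (ξ₂ (t + y) 0 - ξ₂ (t' + y) 0) := by ring
      rw [e]
      have d1 : |ξ₃ (t + y) (s - y) 0 - ξ₃ (t' + y) (s' - y) 0| ≤ gf ξ₂ ξ₃ I J δ (x + y) :=
        gmem₃ δ (x + y) _ _ _ _ 0 0 ht1 ht2 hs1 hs2 h0J h0J
          (by linarith [hy.1]) (by linarith [hy.1])
          (by rw [show t + y - (t' + y) = t - t' by ring]; exact hts)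
          (by rw [show s - y - (s' - y) = s - s' by ring]; exact hss)
          (by simpa using hδ)
      have d2 : |ξ₂ (t + y) 0 - ξ₂ (t' + y) 0| ≤ gf ξ₂ ξ₃ I J δ (x + y) :=
        gmem₂ δ (x + y) _ _ 0 0 ht1 ht2 h0J h0J
          (by linarith [hy.1]) (by linarith [hy.1])
          (by rw [show t + y - (t' + y) = t - t' by ring]; exact hts)
          (by simpa using hδ) hδ
      calc |ξ₂ (t + y) 0 * (ξ₃ (t + y) (s - y) 0 - ξ₃ (t' + y) (s' - y) 0)
            + ξ₃ (t' + y) (s' - y) 0 * (ξ₂ (t + y) 0 - ξ₂ (t' + y) 0)|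
          ≤ |ξ₂ (t + y) 0 * (ξ₃ (t + y) (s - y) 0 - ξ₃ (t' + y) (s' - y) 0)|
            + |ξ₃ (t' + y) (s' - y) 0 * (ξ₂ (t + y) 0 - ξ₂ (t' + y) 0)| := abs_add_le _ _
        _ ≤ M * gf ξ₂ ξ₃ I J δ (x + y) + M * gf ξ₂ ξ₃ I J δ (x + y) := by
            refine add_le_add ?_ ?_
            · rw [abs_mul]
              exact mul_le_mul (hM2 _ ht1 0 h0J) d1 (abs_nonneg _) hM0
            · rw [abs_mul]
              exact mul_le_mul (hM3 _ ht2 _ hs2 0 h0J) d2 (abs_nonneg _) hM0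
        _ = 2 * M * gf ξ₂ ξ₃ I J δ (x + y) := by ring
    have hX := int_diff hc0 hcl hcl' hG hG' hGb hG'b hψint hψb
    have hcov2 : (∫ y in (0:ℝ)..c, 2 * M * gf ξ₂ ξ₃ I J δ (x + y))
        = 2 * M * ∫ u in x..(x + c), gf ξ₂ ξ₃ I J δ u := by
      rw [intervalIntegral.integral_const_mul]
      congr 1
      have h := intervalIntegral.integral_comp_add_left (a := (0:ℝ)) (b := c) (gf ξ₂ ξ₃ I J δ) x
      rw [add_zero] at h
      exact h
    have hxc : x + c ≤ Td := by linarith [hcl, hlt, hxt]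
    have hmono2 : (∫ u in x..(x + c), gf ξ₂ ξ₃ I J δ u) ≤ ∫ y in x..Td, gf ξ₂ ξ₃ I J δ y := by
      have hx2 : x ≤ x + c := by linarith
      have iint := gint δ hδ x hx
      have ia : IntervalIntegrable (gf ξ₂ ξ₃ I J δ) volume x (x + c) :=
        iint.mono_set (by rw [uIcc_of_le hx2, uIcc_of_le hx.2]; exact Icc_subset_Icc le_rfl hxc)
      have ib : IntervalIntegrable (gf ξ₂ ξ₃ I J δ) volume (x + c) Td :=
        iint.mono_set (by rw [uIcc_of_le hxc, uIcc_of_le hx.2]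
                          exact Icc_subset_Icc (by linarith) le_rfl)
      rw [← intervalIntegral.integral_add_adjacent_intervals ia ib]
      have hnn : 0 ≤ ∫ y in (x + c)..Td, gf ξ₂ ξ₃ I J δ y :=
        intervalIntegral.integral_nonneg hxc (fun y hy => gnonneg δ y hδ hy.2)
      linarith
    have f1 : |ξ₁ (min Td (t + s + d)) - ξ₁ (min Td (t' + s' + d))| ≤ K * M ^ 2 * (2 * δ) := by
      refine le_trans (lip₁ _ hmI _ hm'I) ?_
      exact mul_le_mul_of_nonneg_left hmm' (by positivity)
    have f2 : |(∫ y in (0:ℝ)..ℓ, ξ₂ (t + y) 0 * ξ₃ (t + y) (s - y) 0)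
        - ∫ y in (0:ℝ)..ℓ', ξ₂ (t' + y) 0 * ξ₃ (t' + y) (s' - y) 0|
        ≤ M * M * δ + 2 * M * ∫ y in x..Td, gf ξ₂ ξ₃ I J δ y := by
      have h1 : M * M * (ℓ - c) + M * M * (ℓ' - c) ≤ M * M * δ := by
        have h9 := mul_le_mul_of_nonneg_left hsum (mul_nonneg hM0 hM0)
        linarith only [h9]
      have h2 : (∫ y in (0:ℝ)..c, 2 * M * gf ξ₂ ξ₃ I J δ (x + y))
          ≤ 2 * M * ∫ y in x..Td, gf ξ₂ ξ₃ I J δ y := by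
        rw [hcov2]
        exact mul_le_mul_of_nonneg_left hmono2 (by positivity)
      linarith [hX]
    rw [key]
    refine le_trans (abs_sub _ _) ?_
    rw [abs_mul, abs_mul, abs_of_pos hK]
    have t1 := mul_le_mul_of_nonneg_left f1 (abs_nonneg b)
    have t2 := mul_le_mul_of_nonneg_left f2 (le_of_lt hK)
    linarith [t1, t2, gIG δ hδ x hx]
  have lemB : ∀ δ : ℝ, 0 ≤ δ → ∀ x ∈ I, ∀ t ∈ I, ∀ t' ∈ I, ∀ s ∈ J, ∀ s' ∈ J, ∀ r ∈ J, ∀ r' ∈ J,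
      x ≤ t → x ≤ t' → |t - t'| ≤ δ → |s - s'| ≤ δ → |r - r'| ≤ δ →
      |ξ₃ t s r - ξ₃ t' s' r'| ≤
        (2 * |b| * (K * M ^ 2 * (2 * |b|) + K * M ^ 2) + 2 * K * M ^ 2) * δ
        + (2 * |b| * (2 * K * M) + 2 * K * M) * ∫ y in x..Td, gf ξ₂ ξ₃ I J δ y := by
    intro δ hδ x hx t ht t' ht' s hs s' hs' r hr r' hr' hxt hxt' hts hss hrr
    have key : ξ₃ t s r - ξ₃ t' s' r'
        = b * (ξ₂ (min Td (t + min s r + d)) (|s - r| - d)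
            - ξ₂ (min Td (t' + min s' r' + d)) (|s' - r'| - d))
        - K * ((∫ y in (0:ℝ)..(min (Td - t) (min s r + d)),
              ξ₃ (t + y) (s - y) 0 * ξ₃ (t + y) 0 (r - y))
          - ∫ y in (0:ℝ)..(min (Td - t') (min s' r' + d)),
              ξ₃ (t' + y) (s' - y) 0 * ξ₃ (t' + y) 0 (r' - y)) := by
      rw [eq₃ t ht s hs r hr, eq₃ t' ht' s' hs' r' hr']; ring
    set w : ℝ := min s r with hwdef
    set w' : ℝ := min s' r' with hw'def
    set ℓ : ℝ := min (Td - t) (w + d) with hldef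
    set ℓ' : ℝ := min (Td - t') (w' + d) with hl'def
    set c : ℝ := min ℓ ℓ' with hcdef
    have hwd : -d ≤ w := le_min hs.1 hr.1
    have hw'd : -d ≤ w' := le_min hs'.1 hr'.1
    have hws : w ≤ s := min_le_left _ _
    have hwr : w ≤ r := min_le_right _ _
    have hw's : w' ≤ s' := min_le_left _ _
    have hw'r : w' ≤ r' := min_le_right _ _
    have hl0 : 0 ≤ ℓ := le_min (by linarith [ht.2]) (by linarith)
    have hl'0 : 0 ≤ ℓ' := le_min (by linarith [ht'.2]) (by linarith)
    have hc0 : 0 ≤ c := le_min hl0 hl'0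
    have hcl : c ≤ ℓ := min_le_left _ _
    have hcl' : c ≤ ℓ' := min_le_right _ _
    have hlt : ℓ ≤ Td - t := min_le_left _ _
    have hww' : |w - w'| ≤ δ := le_trans (minlip _ _ _ _) (max_le hss hrr)
    have hll' : |ℓ - ℓ'| ≤ 2 * δ := by
      refine le_trans (minlip _ _ _ _) (max_le ?_ ?_)
      · rw [show Td - t - (Td - t') = -(t - t') by ring, abs_neg]; linarith
      · rw [show w + d - (w' + d) = w - w' by ring]; linarith
    have hsum : (ℓ - c) + (ℓ' - c) ≤ 2 * δ := by
      rcases le_total ℓ ℓ' with h | h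
      · rw [hcdef, min_eq_left h]
        have h2 := abs_le.mp hll'
        linarith only [h2.1]
      · rw [hcdef, min_eq_right h]
        have h2 := abs_le.mp hll'
        linarith only [h2.2]
    -- the ξ₂ arguments
    have habsr : |s - r| ≤ d := abs_le.mpr ⟨by linarith [hs.1, hr.2], by linarith [hs.2, hr.1]⟩
    have habsr' : |s' - r'| ≤ d := abs_le.mpr ⟨by linarith [hs'.1, hr'.2], by linarith [hs'.2, hr'.1]⟩
    have haJ : |s - r| - d ∈ J := by
      rw [hJdef, mem_Icc]
      constructor
      · linarith [abs_nonneg (s - r)]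
      · linarith
    have ha'J : |s' - r'| - d ∈ J := by
      rw [hJdef, mem_Icc]
      constructor
      · linarith [abs_nonneg (s' - r')]
      · linarith
    have haa' : |(|s - r| - d) - (|s' - r'| - d)| ≤ 2 * δ := by
      rw [show (|s - r| - d) - (|s' - r'| - d) = |s - r| - |s' - r'| by ring]
      refine le_trans (abs_abs_sub_abs_le_abs_sub _ _) ?_
      rw [show s - r - (s' - r') = (s - s') - (r - r') by ring]
      have := abs_sub (s - s') (r - r')
      linarith
    have hmI : min Td (t + w + d) ∈ I := by
      rw [hIdef, mem_Icc]
      exact ⟨le_min hAT (by linarith [ht.1]), min_le_left _ _⟩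
    have hm'I : min Td (t' + w' + d) ∈ I := by
      rw [hIdef, mem_Icc]
      exact ⟨le_min hAT (by linarith [ht'.1]), min_le_left _ _⟩
    have hmm' : |min Td (t + w + d) - min Td (t' + w' + d)| ≤ 2 * δ := by
      refine le_trans (minlip _ _ _ _) (max_le ?_ ?_)
      · rw [sub_self, abs_zero]; positivity
      · rw [show t + w + d - (t' + w' + d) = (t - t') + (w - w') by ring]
        exact le_trans (abs_add_le _ _) (by linarith)
    have hxm : x ≤ min Td (t + w + d) :=
      le_trans hxt (le_min ht.2 (by linarith))
    have hxm' : x ≤ min Td (t' + w' + d) :=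
      le_trans hxt' (le_min ht'.2 (by linarith))
    -- midpoints
    set m : ℝ := min Td (t + w + d) with hmdef
    set m' : ℝ := min Td (t' + w' + d) with hm'def
    set a : ℝ := |s - r| - d with hadef
    set a' : ℝ := |s' - r'| - d with ha'def
    have hm''I : (m + m') / 2 ∈ I := by
      rw [hIdef, mem_Icc]
      rw [hIdef, mem_Icc] at hmI hm'I
      constructor <;> [linarith [hmI.1, hm'I.1]; linarith [hmI.2, hm'I.2]]
    have ha''J : (a + a') / 2 ∈ J := by
      rw [hJdef, mem_Icc]
      rw [hJdef, mem_Icc] at haJ ha'J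
      constructor <;> [linarith [haJ.1, ha'J.1]; linarith [haJ.2, ha'J.2]]
    have hxm'' : x ≤ (m + m') / 2 := by linarith
    have habs2 : ∀ u v : ℝ, |u - v| ≤ 2 * δ → |u - (u + v) / 2| ≤ δ ∧ |(u + v) / 2 - v| ≤ δ := by
      intro u v huv
      have e1 : u - (u + v) / 2 = (u - v) / 2 := by ring
      have e2 : (u + v) / 2 - v = (u - v) / 2 := by ring
      have e3 : |(u - v) / 2| = |u - v| / 2 := by rw [abs_div, abs_two]
      constructor
      · rw [e1, e3]; linarith
      · rw [e2, e3]; linarith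
    have hξ₂diff : |ξ₂ m a - ξ₂ m' a'|
        ≤ 2 * ((K * M ^ 2 * (2 * |b|) + K * M ^ 2) * δ
          + (2 * K * M) * ∫ y in x..Td, gf ξ₂ ξ₃ I J δ y) := by
      have p1 := lemA δ hδ x hx m hmI ((m + m') / 2) hm''I a haJ ((a + a') / 2) ha''J
        hxm hxm'' (habs2 m m' hmm').1 (habs2 a a' haa').1
      have p2 := lemA δ hδ x hx ((m + m') / 2) hm''I m' hm'I ((a + a') / 2) ha''J a' ha'J
        hxm'' hxm' (habs2 m m' hmm').2 (habs2 a a' haa').2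
      calc |ξ₂ m a - ξ₂ m' a'|
          ≤ |ξ₂ m a - ξ₂ ((m + m') / 2) ((a + a') / 2)|
            + |ξ₂ ((m + m') / 2) ((a + a') / 2) - ξ₂ m' a'| := abs_sub_le _ _ _
        _ ≤ _ := by linarith only [p1, p2]
    -- integral part
    have hdomt : ∀ y ∈ Icc (0:ℝ) ℓ, t + y ∈ I ∧ s - y ∈ J ∧ r - y ∈ J := by
      intro y hy
      obtain ⟨p1, p2⟩ := domty t ht w s hs hws hwd y hy.1 hy.2
      obtain ⟨-, p3⟩ := domty t ht w r hr hwr hwd y hy.1 hy.2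
      exact ⟨p1, p2, p3⟩
    have hdomt' : ∀ y ∈ Icc (0:ℝ) ℓ', t' + y ∈ I ∧ s' - y ∈ J ∧ r' - y ∈ J := by
      intro y hy
      obtain ⟨p1, p2⟩ := domty t' ht' w' s' hs' hw's hw'd y hy.1 hy.2
      obtain ⟨-, p3⟩ := domty t' ht' w' r' hr' hw'r hw'd y hy.1 hy.2
      exact ⟨p1, p2, p3⟩
    have hG : ContinuousOn (fun y => ξ₃ (t + y) (s - y) 0 * ξ₃ (t + y) 0 (r - y)) (Icc 0 ℓ) :=
      (c3a t s ℓ (fun y hy => (hdomt y hy).1) (fun y hy => (hdomt y hy).2.1)).mul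
        (c3b t r ℓ (fun y hy => (hdomt y hy).1) (fun y hy => (hdomt y hy).2.2))
    have hG' : ContinuousOn (fun y => ξ₃ (t' + y) (s' - y) 0 * ξ₃ (t' + y) 0 (r' - y)) (Icc 0 ℓ') :=
      (c3a t' s' ℓ' (fun y hy => (hdomt' y hy).1) (fun y hy => (hdomt' y hy).2.1)).mul
        (c3b t' r' ℓ' (fun y hy => (hdomt' y hy).1) (fun y hy => (hdomt' y hy).2.2))
    have hGb : ∀ y ∈ Icc c ℓ, |ξ₃ (t + y) (s - y) 0 * ξ₃ (t + y) 0 (r - y)| ≤ M * M := by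
      intro y hy
      obtain ⟨h1, h2, h3⟩ := hdomt y ⟨le_trans hc0 hy.1, hy.2⟩
      rw [abs_mul]
      exact mul_le_mul (hM3 _ h1 _ h2 0 h0J) (hM3 _ h1 0 h0J _ h3) (abs_nonneg _) hM0
    have hG'b : ∀ y ∈ Icc c ℓ', |ξ₃ (t' + y) (s' - y) 0 * ξ₃ (t' + y) 0 (r' - y)| ≤ M * M := by
      intro y hy
      obtain ⟨h1, h2, h3⟩ := hdomt' y ⟨le_trans hc0 hy.1, hy.2⟩
      rw [abs_mul]
      exact mul_le_mul (hM3 _ h1 _ h2 0 h0J) (hM3 _ h1 0 h0J _ h3) (abs_nonneg _) hM0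
    have hψint : IntervalIntegrable (fun y => 2 * M * gf ξ₂ ξ₃ I J δ (x + y)) volume 0 c := by
      apply IntervalIntegrable.const_mul
      apply AntitoneOn.intervalIntegrable
      rw [uIcc_of_le hc0]
      intro y1 h1 y2 h2 h12
      exact ganti δ hδ ⟨by linarith [h1.1, hx.1], by linarith [h1.2, hcl]⟩
        ⟨by linarith [h2.1, hx.1], by linarith [h2.2, hcl]⟩ (by linarith)
    have hψb : ∀ y ∈ Icc (0:ℝ) c,
        |ξ₃ (t + y) (s - y) 0 * ξ₃ (t + y) 0 (r - y)
          - ξ₃ (t' + y) (s' - y) 0 * ξ₃ (t' + y) 0 (r' - y)|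
          ≤ 2 * M * gf ξ₂ ξ₃ I J δ (x + y) := by
      intro y hy
      obtain ⟨ht1, hs1, hr1⟩ := hdomt y ⟨hy.1, le_trans hy.2 hcl⟩
      obtain ⟨ht2, hs2, hr2⟩ := hdomt' y ⟨hy.1, le_trans hy.2 hcl'⟩
      have e : ξ₃ (t + y) (s - y) 0 * ξ₃ (t + y) 0 (r - y)
            - ξ₃ (t' + y) (s' - y) 0 * ξ₃ (t' + y) 0 (r' - y)
          = ξ₃ (t + y) (s - y) 0 * (ξ₃ (t + y) 0 (r - y) - ξ₃ (t' + y) 0 (r' - y))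
            + ξ₃ (t' + y) 0 (r' - y) * (ξ₃ (t + y) (s - y) 0 - ξ₃ (t' + y) (s' - y) 0) := by ring
      rw [e]
      have d1 : |ξ₃ (t + y) 0 (r - y) - ξ₃ (t' + y) 0 (r' - y)| ≤ gf ξ₂ ξ₃ I J δ (x + y) :=
        gmem₃ δ (x + y) _ _ 0 0 _ _ ht1 ht2 h0J h0J hr1 hr2
          (by linarith [hy.1]) (by linarith [hy.1])
          (by rw [show t + y - (t' + y) = t - t' by ring]; exact hts)
          (by simpa using hδ)
          (by rw [show r - y - (r' - y) = r - r' by ring]; exact hrr)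
      have d2 : |ξ₃ (t + y) (s - y) 0 - ξ₃ (t' + y) (s' - y) 0| ≤ gf ξ₂ ξ₃ I J δ (x + y) :=
        gmem₃ δ (x + y) _ _ _ _ 0 0 ht1 ht2 hs1 hs2 h0J h0J
          (by linarith [hy.1]) (by linarith [hy.1])
          (by rw [show t + y - (t' + y) = t - t' by ring]; exact hts)
          (by rw [show s - y - (s' - y) = s - s' by ring]; exact hss)
          (by simpa using hδ)
      calc |ξ₃ (t + y) (s - y) 0 * (ξ₃ (t + y) 0 (r - y) - ξ₃ (t' + y) 0 (r' - y))
            + ξ₃ (t' + y) 0 (r' - y) * (ξ₃ (t + y) (s - y) 0 - ξ₃ (t' + y) (s' - y) 0)|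
          ≤ |ξ₃ (t + y) (s - y) 0 * (ξ₃ (t + y) 0 (r - y) - ξ₃ (t' + y) 0 (r' - y))|
            + |ξ₃ (t' + y) 0 (r' - y) * (ξ₃ (t + y) (s - y) 0 - ξ₃ (t' + y) (s' - y) 0)| :=
            abs_add_le _ _
        _ ≤ M * gf ξ₂ ξ₃ I J δ (x + y) + M * gf ξ₂ ξ₃ I J δ (x + y) := by
            refine add_le_add ?_ ?_
            · rw [abs_mul]
              exact mul_le_mul (hM3 _ ht1 _ hs1 0 h0J) d1 (abs_nonneg _) hM0
            · rw [abs_mul]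
              exact mul_le_mul (hM3 _ ht2 0 h0J _ hr2) d2 (abs_nonneg _) hM0
        _ = 2 * M * gf ξ₂ ξ₃ I J δ (x + y) := by ring
    have hX := int_diff hc0 hcl hcl' hG hG' hGb hG'b hψint hψb
    have hcov2 : (∫ y in (0:ℝ)..c, 2 * M * gf ξ₂ ξ₃ I J δ (x + y))
        = 2 * M * ∫ u in x..(x + c), gf ξ₂ ξ₃ I J δ u := by
      rw [intervalIntegral.integral_const_mul]
      congr 1
      have h := intervalIntegral.integral_comp_add_left (a := (0:ℝ)) (b := c) (gf ξ₂ ξ₃ I J δ) x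
      rw [add_zero] at h
      exact h
    have hxc : x + c ≤ Td := by linarith [hcl, hlt, hxt]
    have hmono2 : (∫ u in x..(x + c), gf ξ₂ ξ₃ I J δ u) ≤ ∫ y in x..Td, gf ξ₂ ξ₃ I J δ y := by
      have hx2 : x ≤ x + c := by linarith
      have iint := gint δ hδ x hx
      have ia : IntervalIntegrable (gf ξ₂ ξ₃ I J δ) volume x (x + c) :=
        iint.mono_set (by rw [uIcc_of_le hx2, uIcc_of_le hx.2]; exact Icc_subset_Icc le_rfl hxc)
      have ib : IntervalIntegrable (gf ξ₂ ξ₃ I J δ) volume (x + c) Td :=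
        iint.mono_set (by rw [uIcc_of_le hxc, uIcc_of_le hx.2]
                          exact Icc_subset_Icc (by linarith) le_rfl)
      rw [← intervalIntegral.integral_add_adjacent_intervals ia ib]
      have hnn : 0 ≤ ∫ y in (x + c)..Td, gf ξ₂ ξ₃ I J δ y :=
        intervalIntegral.integral_nonneg hxc (fun y hy => gnonneg δ y hδ hy.2)
      linarith
    have f2 : |(∫ y in (0:ℝ)..ℓ, ξ₃ (t + y) (s - y) 0 * ξ₃ (t + y) 0 (r - y))
        - ∫ y in (0:ℝ)..ℓ', ξ₃ (t' + y) (s' - y) 0 * ξ₃ (t' + y) 0 (r' - y)|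
        ≤ M * M * (2 * δ) + 2 * M * ∫ y in x..Td, gf ξ₂ ξ₃ I J δ y := by
      have h1 : M * M * (ℓ - c) + M * M * (ℓ' - c) ≤ M * M * (2 * δ) := by
        have h9 := mul_le_mul_of_nonneg_left hsum (mul_nonneg hM0 hM0)
        linarith only [h9]
      have h2 : (∫ y in (0:ℝ)..c, 2 * M * gf ξ₂ ξ₃ I J δ (x + y))
          ≤ 2 * M * ∫ y in x..Td, gf ξ₂ ξ₃ I J δ y := by
        rw [hcov2]
        exact mul_le_mul_of_nonneg_left hmono2 (by positivity)
      linarith only [hX, h1, h2]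
    rw [key]
    refine le_trans (abs_sub _ _) ?_
    rw [abs_mul, abs_mul, abs_of_pos hK]
    have t1 := mul_le_mul_of_nonneg_left hξ₂diff (abs_nonneg b)
    have t2 := mul_le_mul_of_nonneg_left f2 (le_of_lt hK)
    linarith only [t1, t2]
  -- constants
  set C₀ : ℝ := (K * M ^ 2 * (2 * |b|) + K * M ^ 2)
    + (2 * |b| * (K * M ^ 2 * (2 * |b|) + K * M ^ 2) + 2 * K * M ^ 2) with hC₀def
  set β₀ : ℝ := (2 * K * M) + (2 * |b| * (2 * K * M) + 2 * K * M) with hβ₀def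
  have hC₀ : 0 ≤ C₀ := by positivity
  have hβ₀ : 0 ≤ β₀ := by positivity
  have core : ∀ δ : ℝ, 0 ≤ δ → ∀ x ∈ I, gf ξ₂ ξ₃ I J δ x ≤ C₀ * δ
      + β₀ * ∫ y in x..Td, gf ξ₂ ξ₃ I J δ y := by
    intro δ hδ x hx
    have hIGx := gIG δ hδ x hx
    have c1 : (K * M ^ 2 * (2 * |b|) + K * M ^ 2) ≤ C₀ := by
      have h9 : (0:ℝ) ≤ 2 * |b| * (K * M ^ 2 * (2 * |b|) + K * M ^ 2) + 2 * K * M ^ 2 := by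
        positivity
      rw [hC₀def]; linarith only [h9]
    have c2 : (2 * |b| * (K * M ^ 2 * (2 * |b|) + K * M ^ 2) + 2 * K * M ^ 2) ≤ C₀ := by
      have h9 : (0:ℝ) ≤ K * M ^ 2 * (2 * |b|) + K * M ^ 2 := by positivity
      rw [hC₀def]; linarith only [h9]
    have b1 : (2 * K * M) ≤ β₀ := by
      have h9 : (0:ℝ) ≤ 2 * |b| * (2 * K * M) + 2 * K * M := by positivity
      rw [hβ₀def]; linarith only [h9]
    have b2 : (2 * |b| * (2 * K * M) + 2 * K * M) ≤ β₀ := by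
      have h9 : (0:ℝ) ≤ 2 * K * M := by positivity
      rw [hβ₀def]; linarith only [h9]
    apply Real.sSup_le _ (add_nonneg (mul_nonneg hC₀ hδ) (mul_nonneg hβ₀ hIGx))
    rintro v ⟨t, t', s, s', r, r', ht, ht', hs, hs', hr, hr', hxt, hxt', h1, h2, h3, hv⟩
    rcases hv with h | h <;> subst h
    · refine le_trans (lemA δ hδ x hx t ht t' ht' s hs s' hs' hxt hxt' h1 h2) ?_
      have q1 := mul_le_mul_of_nonneg_right c1 hδ
      have q2 := mul_le_mul_of_nonneg_right b1 hIGx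
      linarith only [q1, q2]
    · refine le_trans (lemB δ hδ x hx t ht t' ht' s hs s' hs' r hr r' hr' hxt hxt' h1 h2 h3) ?_
      have q1 := mul_le_mul_of_nonneg_right c2 hδ
      have q2 := mul_le_mul_of_nonneg_right b2 hIGx
      linarith only [q1, q2]
  have gron : ∀ δ : ℝ, 0 ≤ δ → ∀ x ∈ I, gf ξ₂ ξ₃ I J δ x
      ≤ (C₀ * δ) * Real.exp (β₀ * (Td - A)) := by
    intro δ hδ
    exact gronwall_aux hAT (by positivity) hβ₀ (by positivity)
      (fun x hx => gub δ x) (gint δ hδ) (core δ hδ)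
  -- final constant
  have hAI : A ∈ I := by rw [hIdef, mem_Icc]; exact ⟨le_rfl, hAT⟩
  have hE : (0:ℝ) < Real.exp (β₀ * (Td - A)) := Real.exp_pos _
  have hfin : ∀ v δ : ℝ, 0 ≤ δ → v ≤ gf ξ₂ ξ₃ I J δ A →
      v ≤ (1 + K * M ^ 2 + C₀ * Real.exp (β₀ * (Td - A))) * δ := by
    intro v δ hδ hv
    have h := le_trans hv (gron δ hδ A hAI)
    have h7 : 0 ≤ (1 + K * M ^ 2) * δ := by positivity
    linarith only [h, h7]
  refine ⟨1 + K * M ^ 2 + C₀ * Real.exp (β₀ * (Td - A)), by positivity, ?_, ?_, ?_, ?_, ?_, ?_⟩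
  · intro t ht t' ht'
    have h := lip₁ t ht t' ht'
    have h7 : 0 ≤ |t - t'| := abs_nonneg _
    have h8 : 0 ≤ C₀ * Real.exp (β₀ * (Td - A)) * |t - t'| :=
      mul_nonneg (mul_nonneg hC₀ hE.le) h7
    linarith only [h, h7, h8]
  · intro s hs t ht t' ht'
    have hδ : (0:ℝ) ≤ |t - t'| := abs_nonneg _
    refine hfin _ _ hδ (gmem₂ |t - t'| A t t' s s ht ht' hs hs ht.1 ht'.1 le_rfl ?_ hδ)
    rw [sub_self, abs_zero]; exact hδ
  · intro t ht s hs s' hs'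
    have hδ : (0:ℝ) ≤ |s - s'| := abs_nonneg _
    refine hfin _ _ hδ (gmem₂ |s - s'| A t t s s' ht ht hs hs' ht.1 ht.1 ?_ le_rfl hδ)
    rw [sub_self, abs_zero]; exact hδ
  · intro s hs r hr t ht t' ht'
    have hδ : (0:ℝ) ≤ |t - t'| := abs_nonneg _
    refine hfin _ _ hδ (gmem₃ |t - t'| A t t' s s r r ht ht' hs hs hr hr ht.1 ht'.1 le_rfl ?_ ?_)
    · rw [sub_self, abs_zero]; exact hδ
    · rw [sub_self, abs_zero]; exact hδ
  · intro t ht r hr s hs s' hs'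
    have hδ : (0:ℝ) ≤ |s - s'| := abs_nonneg _
    refine hfin _ _ hδ (gmem₃ |s - s'| A t t s s' r r ht ht hs hs' hr hr ht.1 ht.1 ?_ le_rfl ?_)
    · rw [sub_self, abs_zero]; exact hδ
    · rw [sub_self, abs_zero]; exact hδ
  · intro t ht s hs r hr r' hr'
    have hδ : (0:ℝ) ≤ |r - r'| := abs_nonneg _
    refine hfin _ _ hδ (gmem₃ |r - r'| A t t s s r r' ht ht hs hs hr hr' ht.1 ht.1 ?_ ?_ le_rfl)
    · rw [sub_self, abs_zero]; exact hδ
    · rw [sub_self, abs_zero]; exact hδ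
end
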